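/- arXiv:1309.3767 — 9 statements merged into one kernel-verified Lean document; each statement's English description precedes it below -/
import Mathlib

section
/- Let f = h + conj(g) be harmonic on the unit disk with h, g analytic, satisfying |g⁽ⁿ⁾(0)| ≤ |h⁽ⁿ⁾(0)| for all n ≥ 1. If S_f(r₁) ≤ m < 1 for some 0 < r₁ < 1 and S_f(1) := sup_{0<r<1} S_f(r) ≤ 1, then S_f(r) ≤ m^(log r / log r₁) for all r₁ ≤ r < 1. -/
open Metric MeasureTheory Set Filter Topology

set_option maxHeartbeats 1000000

lemma exp_int_pi_sub (c : ℂ) (n : ℤ) (hc : c = n * Complex.I) :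
    Complex.exp (c * ((Real.pi : ℝ) : ℂ)) - Complex.exp (c * (((-Real.pi : ℝ)) : ℂ)) = 0 := by
  subst hc
  have h1 : ((n : ℂ) * Complex.I) * ((Real.pi : ℝ) : ℂ) = n * (Real.pi * Complex.I) := by ring
  have h2 : ((n : ℂ) * Complex.I) * (((-Real.pi : ℝ)) : ℂ) = ((-n : ℤ) : ℂ) * (Real.pi * Complex.I) := by
    push_cast; ring
  rw [h1, h2, Complex.exp_int_mul, Complex.exp_int_mul]
  have : Complex.exp (Real.pi * Complex.I) = -1 := Complex.exp_pi_mul_I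
  rw [this]
  have : ((-1 : ℂ)) ^ (-n) = ((-1 : ℂ)) ^ n := by
    rw [zpow_neg]
    exact inv_eq_of_mul_eq_one_left (by rw [← mul_zpow]; norm_num)
  rw [this, sub_self]

lemma ortho (r : ℝ) (hr : 0 < r) (j k : ℕ) :
    ∫ z in ball (0 : ℂ) r, z ^ j * (starRingEnd ℂ z) ^ k =
      if j = k then ((Real.pi * r ^ (2 * j + 2) / (j + 1) : ℝ) : ℂ) else 0 := by
  classical
  set f : ℂ → ℂ := fun z => z ^ j * (starRingEnd ℂ z) ^ k with hf
  have key := Complex.integral_comp_polarCoord_symm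
    (fun z => (ball (0 : ℂ) r).indicator f z)
  rw [MeasureTheory.integral_indicator measurableSet_ball] at key
  rw [← key]
  -- rewrite polar side
  have hsymm : ∀ p : ℝ × ℝ, Complex.polarCoord.symm p
      = (p.1 : ℂ) * Complex.exp (p.2 * Complex.I) := by
    intro p
    rw [Complex.polarCoord_symm_apply, Complex.exp_mul_I]
    norm_num
  have hpre : (fun p : ℝ × ℝ => p.1 • (ball (0 : ℂ) r).indicator f (Complex.polarCoord.symm p))
      = fun p : ℝ × ℝ => ((Complex.polarCoord.symm) ⁻¹' (ball (0:ℂ) r)).indicator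
          (fun p : ℝ × ℝ => p.1 • f (Complex.polarCoord.symm p)) p := by
    funext p
    by_cases hp : Complex.polarCoord.symm p ∈ ball (0:ℂ) r
    · rw [Set.indicator_of_mem hp, Set.indicator_of_mem (Set.mem_preimage.mpr hp)]
    · rw [Set.indicator_of_notMem hp,
        Set.indicator_of_notMem (fun hcon => hp (Set.mem_preimage.mp hcon)), smul_zero]
  rw [hpre]
  have hmeas : MeasurableSet ((Complex.polarCoord.symm) ⁻¹' (ball (0:ℂ) r)) := by
    have : Continuous (fun p : ℝ × ℝ => Complex.polarCoord.symm p) := by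
      have : (fun p : ℝ × ℝ => Complex.polarCoord.symm p)
          = fun p : ℝ × ℝ => (p.1 : ℂ) * Complex.exp (p.2 * Complex.I) := funext hsymm
      rw [this]; continuity
    exact (this.measurable) measurableSet_ball
  rw [MeasureTheory.setIntegral_indicator hmeas]
  have hset : polarCoord.target ∩ ((Complex.polarCoord.symm) ⁻¹' (ball (0:ℂ) r))
      = Set.Ioo (0:ℝ) r ×ˢ Set.Ioo (-Real.pi) Real.pi := by
    ext p
    simp only [polarCoord_target, Set.mem_inter_iff, Set.mem_prod, Set.mem_Ioi, Set.mem_Ioo,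
      Set.mem_preimage, mem_ball_zero_iff, Complex.norm_polarCoord_symm]
    constructor
    · rintro ⟨⟨h1, h2⟩, h3⟩
      exact ⟨⟨h1, by rwa [abs_of_pos h1] at h3⟩, h2⟩
    · rintro ⟨⟨h1, h2⟩, h3⟩
      exact ⟨⟨h1, h3⟩, by rwa [abs_of_pos h1]⟩
  rw [hset]
  have hfun : ∀ p ∈ Set.Ioo (0:ℝ) r ×ˢ Set.Ioo (-Real.pi) Real.pi,
      p.1 • f (Complex.polarCoord.symm p)
      = (fun x : ℝ => ((x : ℂ)) ^ (j + k + 1)) p.1 *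
        (fun θ : ℝ => Complex.exp ((((j:ℂ) - k) * Complex.I) * θ)) p.2 := by
    rintro ⟨x, θ⟩ -
    simp only [hsymm, hf]
    have hE : (starRingEnd ℂ) ((x:ℂ) * Complex.exp ((θ:ℂ) * Complex.I))
        = (x:ℂ) * Complex.exp (-(θ:ℂ) * Complex.I) := by
      rw [map_mul, ← Complex.exp_conj, map_mul, Complex.conj_ofReal, Complex.conj_I,
        Complex.conj_ofReal]
      ring_nf
    rw [hE, mul_pow, mul_pow, ← Complex.exp_nat_mul, ← Complex.exp_nat_mul, Complex.real_smul]
    rw [show (((j:ℂ) - k) * Complex.I) * (θ:ℂ)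
        = (j:ℂ) * ((θ:ℂ) * Complex.I) + (k:ℂ) * (-(θ:ℂ) * Complex.I) by ring, Complex.exp_add]
    ring
  rw [MeasureTheory.setIntegral_congr_fun (measurableSet_Ioo.prod measurableSet_Ioo) hfun]
  rw [MeasureTheory.Measure.volume_eq_prod]
  have hprod := MeasureTheory.setIntegral_prod_mul (μ := (volume : Measure ℝ))
    (ν := (volume : Measure ℝ)) (fun x : ℝ => ((x : ℂ)) ^ (j + k + 1))
    (fun θ : ℝ => Complex.exp ((((j:ℂ) - k) * Complex.I) * θ))
    (Set.Ioo (0:ℝ) r) (Set.Ioo (-Real.pi) Real.pi)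
  rw [hprod]
  -- first factor
  have hI1 : (∫ x in Set.Ioo (0:ℝ) r, ((x : ℂ)) ^ (j + k + 1))
      = ((r ^ (j + k + 2) / (j + k + 2) : ℝ) : ℂ) := by
    have : (fun x : ℝ => ((x : ℂ)) ^ (j + k + 1)) = fun x : ℝ => ((x ^ (j + k + 1) : ℝ) : ℂ) := by
      funext x; push_cast; ring
    rw [this, ← MeasureTheory.integral_Ioc_eq_integral_Ioo,
      ← intervalIntegral.integral_of_le hr.le, intervalIntegral.integral_ofReal, integral_pow]
    push_cast
    ring
  rw [hI1]
  by_cases hjk : j = k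
  · subst hjk
    have : ((j:ℂ) - j) * Complex.I = 0 := by ring
    rw [this]
    simp only [zero_mul, Complex.exp_zero]
    rw [MeasureTheory.setIntegral_const]
    rw [Real.volume_real_Ioo_of_le (by linarith [Real.pi_pos] : -Real.pi ≤ Real.pi)]
    have h2 : Real.pi - -Real.pi = 2 * Real.pi := by ring
    rw [h2]
    rw [Complex.real_smul]
    push_cast
    have hne : ((j:ℂ) + j + 2) ≠ 0 := by
      intro hcon
      have h3 := congrArg Complex.re hcon
      simp only [Complex.add_re, Complex.natCast_re, Complex.ofReal_re, Complex.re_ofNat,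
        Complex.zero_re] at h3
      have hj : (0:ℝ) ≤ j := Nat.cast_nonneg j
      linarith
    have hne1 : (1 + (j:ℂ)) ≠ 0 := by
      intro hcon
      have h3 := congrArg Complex.re hcon
      simp only [Complex.add_re, Complex.natCast_re, Complex.one_re, Complex.zero_re] at h3
      have hj : (0:ℝ) ≤ j := Nat.cast_nonneg j
      linarith
    field_simp
    have hkey : ((j:ℂ) * (1 + (j:ℂ))⁻¹ + (1 + (j:ℂ))⁻¹) = 1 := by field_simp; ring
    have hne2 : (j:ℂ) * (1 + 1) + 2 ≠ 0 := by
      rw [show ((j:ℂ) * (1 + 1) + 2) = j + j + 2 by ring]; exact hne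
    rw [div_eq_iff hne2, show j + j + 2 = 2 * j + 2 by ring]
    ring
  · have hc : (((j:ℂ) - k) * Complex.I) ≠ 0 := by
      simp only [ne_eq, mul_eq_zero, Complex.I_ne_zero, or_false, sub_eq_zero]
      exact_mod_cast fun hcon => hjk (by exact_mod_cast hcon)
    have hI2 : (∫ θ in Set.Ioo (-Real.pi) Real.pi,
        Complex.exp ((((j:ℂ) - k) * Complex.I) * θ)) = 0 := by
      rw [← MeasureTheory.integral_Ioc_eq_integral_Ioo,
        ← intervalIntegral.integral_of_le (by linarith [Real.pi_pos] : -Real.pi ≤ Real.pi)]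
      rw [integral_exp_mul_complex hc]
      rw [div_eq_zero_iff]
      left
      have : ((j:ℂ) - k) * Complex.I = ((j:ℤ) - (k:ℤ) : ℤ) * Complex.I := by push_cast; ring
      rw [exp_int_pi_sub _ _ this]
    rw [hI2, mul_zero, if_neg hjk]

lemma parseval_disk (q : ℂ → ℂ) (hq : DifferentiableOn ℂ q (ball (0:ℂ) 1))
    (r : ℝ) (hr0 : 0 < r) (hr1 : r < 1) :
    HasSum
      (fun n : ℕ => ‖(n.factorial : ℂ)⁻¹ * iteratedDeriv n q 0‖ ^ 2
        * (Real.pi * r ^ (2 * n + 2) / (n + 1)))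
      (∫ z in ball (0:ℂ) r, ‖q z‖ ^ 2) := by
  classical
  set a : ℕ → ℂ := fun n => (n.factorial : ℂ)⁻¹ * iteratedDeriv n q 0 with ha
  set S : ℕ → ℂ → ℂ := fun n z => ∑ i ∈ Finset.range n, a i * z ^ i with hS
  set w : ℕ → ℝ := fun j => Real.pi * r ^ (2 * j + 2) / (j + 1) with hw
  have hw0 : ∀ j, 0 ≤ w j := by
    intro j
    have : (0:ℝ) ≤ (j:ℝ) + 1 := by positivity
    apply div_nonneg _ this
    positivity
  -- pointwise convergence of the Taylor series
  have hps : ∀ z ∈ ball (0:ℂ) 1, HasSum (fun n => a n * z ^ n) (q z) := by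
    intro z hz
    have H := Complex.hasSum_taylorSeries_on_ball hq hz
    have : (fun n : ℕ => (n.factorial : ℂ)⁻¹ • (z - 0) ^ n • iteratedDeriv n q 0)
        = fun n => a n * z ^ n := by
      funext n
      simp only [sub_zero, smul_eq_mul, ha]
      ring
    rwa [this] at H
  -- uniform bound on partial sums over ball r
  set r' : ℝ := (1 + r) / 2 with hr'
  have hrr' : r < r' := by rw [hr']; linarith
  have hr'1 : r' < 1 := by rw [hr']; linarith
  have hr'0 : 0 < r' := by rw [hr']; linarith
  have hz₀ : (r' : ℂ) ∈ ball (0:ℂ) 1 := by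
    simp [mem_ball_zero_iff, Complex.norm_real, abs_of_pos hr'0, hr'1]
  have hsum₀ := (hps _ hz₀).summable
  have htend : Filter.Tendsto (fun n => ‖a n‖ * r' ^ n) Filter.atTop (nhds 0) := by
    have h0 := hsum₀.tendsto_atTop_zero
    have := h0.norm
    simp only [norm_zero] at this
    refine this.congr fun n => ?_
    rw [norm_mul, norm_pow, Complex.norm_real, Real.norm_eq_abs,
      abs_of_pos hr'0]
  obtain ⟨M, hM⟩ := htend.bddAbove_range
  have hMspec : ∀ n, ‖a n‖ * r' ^ n ≤ M := fun n =>
    hM (Set.mem_range_self n)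
  have hM0 : 0 ≤ M := le_trans (by positivity) (hMspec 0)
  set x : ℝ := r / r' with hx
  have hx0 : 0 ≤ x := by positivity
  have hx1 : x < 1 := by
    rw [hx, div_lt_one hr'0]; exact hrr'
  have hgeo : Summable (fun j : ℕ => M * x ^ j) :=
    (summable_geometric_of_lt_one hx0 hx1).mul_left M
  set C : ℝ := ∑' j : ℕ, M * x ^ j with hC
  have hC0 : 0 ≤ C := tsum_nonneg fun j => by positivity
  have hbound : ∀ n, ∀ z ∈ ball (0:ℂ) r, ‖S n z‖ ≤ C := by
    intro n z hz
    have hzr : ‖z‖ ≤ r := le_of_lt (by simpa [mem_ball_zero_iff] using hz)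
    calc ‖S n z‖ ≤ ∑ i ∈ Finset.range n, ‖a i * z ^ i‖ := by
          simpa [hS] using (norm_sum_le (Finset.range n) (fun i => a i * z ^ i))
      _ ≤ ∑ i ∈ Finset.range n, M * x ^ i := by
          apply Finset.sum_le_sum
          intro i _
          rw [norm_mul, norm_pow]
          have h1 : ‖a i‖ * ‖z‖ ^ i ≤ ‖a i‖ * r ^ i := by
            apply mul_le_mul_of_nonneg_left _ (norm_nonneg _)
            exact pow_le_pow_left₀ (norm_nonneg z) hzr i
          refine h1.trans ?_
          have hr'x : r' * x = r := by
            rw [hx]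
            field_simp
          have h2 : ‖a i‖ * r ^ i = (‖a i‖ * r' ^ i) * x ^ i := by
            rw [mul_assoc, ← mul_pow, hr'x]
          rw [h2]
          apply mul_le_mul_of_nonneg_right (hMspec i) (by positivity)
      _ ≤ C := Summable.sum_le_tsum (Finset.range n) (fun j _ => by positivity) hgeo
  -- integrability of continuous functions on the ball
  have hball_fin : volume (ball (0:ℂ) r) < ⊤ := measure_ball_lt_top
  have hint : ∀ F : ℂ → ℂ, Continuous F → IntegrableOn F (ball (0:ℂ) r) volume := by
    intro F hF
    exact (hF.continuousOn.integrableOn_compact (isCompact_closedBall _ _)).mono_set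
      ball_subset_closedBall
  -- integral of |S n|^2
  have hSint : ∀ n, (∫ z in ball (0:ℂ) r, ‖S n z‖ ^ 2)
      = ∑ j ∈ Finset.range n, ‖a j‖ ^ 2 * w j := by
    intro n
    have hScont : Continuous (S n) := by
      apply continuous_finset_sum
      intro i _
      exact (continuous_const.mul (continuous_pow i))
    have hconj_cont : Continuous (fun z => (starRingEnd ℂ) (S n z)) :=
      Complex.continuous_conj.comp hScont
    have hprod_cont : Continuous (fun z => S n z * (starRingEnd ℂ) (S n z)) :=
      hScont.mul hconj_cont
    have hintSS : IntegrableOn (fun z => S n z * (starRingEnd ℂ) (S n z))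
        (ball (0:ℂ) r) volume := hint _ hprod_cont
    -- complex integral identity
    have hcint : (∫ z in ball (0:ℂ) r, S n z * (starRingEnd ℂ) (S n z))
        = ((∑ j ∈ Finset.range n, ‖a j‖ ^ 2 * w j : ℝ) : ℂ) := by
      have hexpand : ∀ z : ℂ, S n z * (starRingEnd ℂ) (S n z)
          = ∑ j ∈ Finset.range n, ∑ k ∈ Finset.range n,
              (a j * (starRingEnd ℂ) (a k)) * (z ^ j * (starRingEnd ℂ) z ^ k) := by
        intro z
        rw [hS]
        simp only [map_sum, map_mul, map_pow]
        rw [Finset.sum_mul_sum]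
        apply Finset.sum_congr rfl
        intro j _
        apply Finset.sum_congr rfl
        intro k _
        ring
      simp_rw [hexpand]
      rw [MeasureTheory.integral_finset_sum]
      swap
      · intro j _
        apply MeasureTheory.integrable_finset_sum
        intro k _
        apply hint
        exact continuous_const.mul ((continuous_pow j).mul
          ((Complex.continuous_conj.pow k)))
      have : ∀ j ∈ Finset.range n,
          (∫ z in ball (0:ℂ) r, ∑ k ∈ Finset.range n,
            (a j * (starRingEnd ℂ) (a k)) * (z ^ j * (starRingEnd ℂ) z ^ k))
          = ((‖a j‖ ^ 2 * w j : ℝ) : ℂ) := by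
        intro j hj
        rw [MeasureTheory.integral_finset_sum]
        swap
        · intro k _
          apply hint
          exact continuous_const.mul ((continuous_pow j).mul
            ((Complex.continuous_conj.pow k)))
        have hterm : ∀ k ∈ Finset.range n,
            (∫ z in ball (0:ℂ) r, (a j * (starRingEnd ℂ) (a k)) * (z ^ j * (starRingEnd ℂ) z ^ k))
            = if j = k then (a j * (starRingEnd ℂ) (a k)) * ((w j : ℝ) : ℂ) else 0 := by
          intro k _
          rw [MeasureTheory.integral_const_mul, ortho r hr0 j k]
          by_cases hjk : j = k
          · rw [if_pos hjk, if_pos hjk]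
          · rw [if_neg hjk, if_neg hjk, mul_zero]
        rw [Finset.sum_congr rfl hterm]
        rw [Finset.sum_ite_eq (Finset.range n) j
          (fun k => (a j * (starRingEnd ℂ) (a k)) * ((w j : ℝ) : ℂ))]
        rw [if_pos hj, Complex.mul_conj]
        rw [← Complex.sq_norm]
        push_cast
        ring
      rw [Finset.sum_congr rfl this]
      push_cast
      ring
    have habs : ∀ z : ℂ, ‖S n z‖ ^ 2 = (S n z * (starRingEnd ℂ) (S n z)).re := by
      intro z
      rw [Complex.mul_conj, Complex.ofReal_re, ← Complex.sq_norm]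
    simp_rw [habs]
    have hre := integral_re (𝕜 := ℂ) hintSS
    simp only [RCLike.re_to_complex] at hre
    rw [hre, hcint, Complex.ofReal_re]
  -- dominated convergence
  haveI : IsFiniteMeasure (volume.restrict (ball (0:ℂ) r)) := by
    constructor
    rw [Measure.restrict_apply_univ]
    exact hball_fin
  have hqcont : ContinuousOn q (ball (0:ℂ) 1) :=
    hq.continuousOn
  have hdom : Filter.Tendsto (fun n => ∫ z in ball (0:ℂ) r, ‖S n z‖ ^ 2)
      Filter.atTop (nhds (∫ z in ball (0:ℂ) r, ‖q z‖ ^ 2)) := by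
    apply MeasureTheory.tendsto_integral_of_dominated_convergence (fun _ => C ^ 2)
    · intro n
      exact (Continuous.aestronglyMeasurable (by continuity :
        Continuous fun z => ‖S n z‖ ^ 2)).restrict
    · exact MeasureTheory.integrable_const _
    · intro n
      rw [MeasureTheory.ae_restrict_iff' measurableSet_ball]
      apply MeasureTheory.ae_of_all
      intro z hz
      rw [Real.norm_eq_abs, abs_of_nonneg (by positivity)]
      exact pow_le_pow_left₀ (norm_nonneg _) (hbound n z hz) 2
    · rw [MeasureTheory.ae_restrict_iff' measurableSet_ball]
      apply MeasureTheory.ae_of_all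
      intro z hz
      have hz1 : z ∈ ball (0:ℂ) 1 := ball_subset_ball hr1.le hz
      have hlim := (hps z hz1).tendsto_sum_nat
      have hcont : Continuous (fun u : ℂ => ‖u‖ ^ 2) := by continuity
      exact ((hcont.tendsto (q z)).comp hlim).congr fun n => rfl
  simp_rw [hSint] at hdom
  rw [hasSum_iff_tendsto_nat_of_nonneg (fun n => by positivity)]
  exact hdom


/-- Three circles type theorem for the harmonic area function. -/
theorem harmonic_three_circles_area (h g : ℂ → ℂ) (r₁ m : ℝ)
    (hh : DifferentiableOn ℂ h (ball (0 : ℂ) 1))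
    (hg : DifferentiableOn ℂ g (ball (0 : ℂ) 1))
    (hr₁0 : 0 < r₁) (hr₁1 : r₁ < 1)
    (hcoef : ∀ n : ℕ, 1 ≤ n →
      ‖iteratedDeriv n g 0‖ ≤ ‖iteratedDeriv n h 0‖)
    (hSr₁ : (Real.pi)⁻¹ *
        ∫ z in ball (0 : ℂ) r₁,
          (‖deriv h z‖ ^ 2 - ‖deriv g z‖ ^ 2) ≤ m)
    (hm1 : m < 1)
    (hS1 : ∀ r : ℝ, 0 < r → r < 1 →
      (Real.pi)⁻¹ *
          ∫ z in ball (0 : ℂ) r,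
            (‖deriv h z‖ ^ 2 - ‖deriv g z‖ ^ 2) ≤ 1) :
    ∀ r : ℝ, r₁ ≤ r → r < 1 →
      (Real.pi)⁻¹ *
          ∫ z in ball (0 : ℂ) r,
            (‖deriv h z‖ ^ 2 - ‖deriv g z‖ ^ 2) ≤
        m ^ (Real.log r / Real.log r₁) := by
  classical
  intro r hr₁r hr1
  have hr0 : 0 < r := lt_of_lt_of_le hr₁0 hr₁r
  -- derivatives are differentiable
  have hq1 : DifferentiableOn ℂ (deriv h) (ball (0:ℂ) 1) :=
    ((hh.analyticOnNhd isOpen_ball).deriv).differentiableOn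
  have hq2 : DifferentiableOn ℂ (deriv g) (ball (0:ℂ) 1) :=
    ((hg.analyticOnNhd isOpen_ball).deriv).differentiableOn
  set a : ℕ → ℂ := fun n => (n.factorial : ℂ)⁻¹ * iteratedDeriv n (deriv h) 0 with hadef
  set b : ℕ → ℂ := fun n => (n.factorial : ℂ)⁻¹ * iteratedDeriv n (deriv g) 0 with hbdef
  set c : ℕ → ℝ := fun n => (‖a n‖ ^ 2 - ‖b n‖ ^ 2) / (n + 1) with hcdef
  -- coefficient domination
  have hba : ∀ n, ‖b n‖ ≤ ‖a n‖ := by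
    intro n
    rw [hadef, hbdef]
    simp only [norm_mul]
    apply mul_le_mul_of_nonneg_left _ (norm_nonneg _)
    have h1 : iteratedDeriv n (deriv g) 0 = iteratedDeriv (n+1) g 0 := by
      rw [iteratedDeriv_succ']
    have h2 : iteratedDeriv n (deriv h) 0 = iteratedDeriv (n+1) h 0 := by
      rw [iteratedDeriv_succ']
    rw [h1, h2]
    exact hcoef (n+1) (by omega)
  have hc0 : ∀ n, 0 ≤ c n := by
    intro n
    rw [hcdef]
    apply div_nonneg _ (by positivity)
    have := pow_le_pow_left₀ (norm_nonneg (b n)) (hba n) 2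
    linarith
  -- key identity
  have key : ∀ ρ : ℝ, 0 < ρ → ρ < 1 →
      HasSum (fun n => c n * ρ ^ (2 * n + 2))
        ((Real.pi)⁻¹ * ∫ z in ball (0:ℂ) ρ,
          (‖deriv h z‖ ^ 2 - ‖deriv g z‖ ^ 2)) := by
    intro ρ h0 h1'
    have P1 := parseval_disk (deriv h) hq1 ρ h0 h1'
    have P2 := parseval_disk (deriv g) hq2 ρ h0 h1'
    -- integrability
    have hintF : ∀ F : ℂ → ℂ, DifferentiableOn ℂ F (ball (0:ℂ) 1) →
        IntegrableOn (fun z => ‖F z‖ ^ 2) (ball (0:ℂ) ρ) volume := by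
      intro F hF
      have hcont : ContinuousOn (fun z => ‖F z‖ ^ 2) (closedBall (0:ℂ) ρ) := by
        apply ContinuousOn.pow
        apply Continuous.comp_continuousOn continuous_norm
        exact hF.continuousOn.mono (closedBall_subset_ball h1')
      exact (hcont.integrableOn_compact (isCompact_closedBall _ _)).mono_set
        ball_subset_closedBall
    have hsub : (∫ z in ball (0:ℂ) ρ,
          (‖deriv h z‖ ^ 2 - ‖deriv g z‖ ^ 2))
        = (∫ z in ball (0:ℂ) ρ, ‖deriv h z‖ ^ 2)
          - (∫ z in ball (0:ℂ) ρ, ‖deriv g z‖ ^ 2) :=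
      MeasureTheory.integral_sub (hintF _ hq1) (hintF _ hq2)
    have H := ((P1.sub P2).mul_left (Real.pi)⁻¹)
    have hfun : (fun n => (Real.pi)⁻¹ *
          (‖a n‖ ^ 2 * (Real.pi * ρ ^ (2 * n + 2) / (n + 1))
            - ‖b n‖ ^ 2 * (Real.pi * ρ ^ (2 * n + 2) / (n + 1))))
        = fun n => c n * ρ ^ (2 * n + 2) := by
      funext n
      rw [hcdef]
      have hn1 : ((n:ℝ) + 1) ≠ 0 := by positivity
      field_simp
    rw [hfun] at H
    rw [hsub]
    exact H
  -- m is nonnegative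
  have hkey₁ := key r₁ hr₁0 hr₁1
  have htsum₁ : (∑' n, c n * r₁ ^ (2 * n + 2)) ≤ m := by
    rw [hkey₁.tsum_eq]; exact hSr₁
  have hm0 : 0 ≤ m :=
    le_trans (tsum_nonneg fun n => mul_nonneg (hc0 n) (by positivity)) htsum₁
  -- tsum of c is at most 1
  have hcsum_bound : ∀ N : ℕ, ∑ n ∈ Finset.range N, c n ≤ 1 := by
    intro N
    have hcont : Continuous (fun ρ : ℝ => ∑ n ∈ Finset.range N, c n * ρ ^ (2 * n + 2)) := by
      apply continuous_finset_sum
      intro i _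
      exact continuous_const.mul (continuous_pow _)
    have htendsto : Filter.Tendsto (fun ρ : ℝ => ∑ n ∈ Finset.range N, c n * ρ ^ (2 * n + 2))
        (nhdsWithin 1 (Set.Iio 1)) (nhds (∑ n ∈ Finset.range N, c n)) := by
      have h0 := (hcont.tendsto 1).mono_left (nhdsWithin_le_nhds (s := Set.Iio (1:ℝ)))
      simpa using h0
    apply le_of_tendsto htendsto
    filter_upwards [Ioo_mem_nhdsLT_of_mem
      (show (1:ℝ) ∈ Set.Ioc 0 1 by constructor <;> norm_num)] with ρ hρ
    calc ∑ n ∈ Finset.range N, c n * ρ ^ (2 * n + 2)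
        ≤ (Real.pi)⁻¹ * ∫ z in ball (0:ℂ) ρ,
            (‖deriv h z‖ ^ 2 - ‖deriv g z‖ ^ 2) := by
          apply sum_le_hasSum (Finset.range N) _ (key ρ hρ.1 hρ.2)
          intro n _
          exact mul_nonneg (hc0 n) (pow_nonneg hρ.1.le _)
      _ ≤ 1 := hS1 ρ hρ.1 hρ.2
  have hcsummable : Summable c := summable_of_sum_range_le hc0 hcsum_bound
  have hctsum : (∑' n, c n) ≤ 1 := Real.tsum_le_of_sum_range_le hc0 hcsum_bound
  -- the exponent
  set θ : ℝ := Real.log r / Real.log r₁ with hθdef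
  have hlogr : Real.log r < 0 := Real.log_neg hr0 hr1
  have hlogr₁ : Real.log r₁ < 0 := Real.log_neg hr₁0 hr₁1
  have hθpos : 0 < θ := div_pos_of_neg_of_neg hlogr hlogr₁
  have hθle1 : θ ≤ 1 := by
    rw [hθdef, div_le_one_iff]
    right; right
    exact ⟨hlogr₁, Real.log_le_log hr₁0 hr₁r⟩
  have hrθ : r = r₁ ^ θ := by
    rw [Real.rpow_def_of_pos hr₁0, hθdef, mul_comm, div_mul_cancel₀ _ (ne_of_lt hlogr₁),
      Real.exp_log hr0]
  have hkeyr := key r hr0 hr1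
  rcases eq_or_lt_of_le hm0 with hm | hm
  · -- m = 0 : all coefficients vanish
    have hczero : ∀ n, c n * r ^ (2 * n + 2) = 0 := by
      intro n
      have hterm : c n * r₁ ^ (2 * n + 2) ≤ 0 := by
        calc c n * r₁ ^ (2 * n + 2)
            ≤ ∑' k, c k * r₁ ^ (2 * k + 2) := by
              apply Summable.le_tsum hkey₁.summable n
              intro k _
              exact mul_nonneg (hc0 k) (by positivity)
          _ ≤ m := htsum₁
          _ = 0 := hm.symm
      have hc : c n = 0 := by
        have h1 : 0 ≤ c n * r₁ ^ (2 * n + 2) := mul_nonneg (hc0 n) (by positivity)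
        have h2 : c n * r₁ ^ (2 * n + 2) = 0 := le_antisymm hterm h1
        have h3 : r₁ ^ (2 * n + 2) ≠ 0 := by positivity
        exact (mul_eq_zero.mp h2).resolve_right h3
      rw [hc, zero_mul]
    have hS0 : ((Real.pi)⁻¹ * ∫ z in ball (0:ℂ) r,
        (‖deriv h z‖ ^ 2 - ‖deriv g z‖ ^ 2)) = 0 := by
      have : HasSum (fun n => c n * r ^ (2 * n + 2)) 0 := by
        rw [show (fun n => c n * r ^ (2 * n + 2)) = fun _ => (0:ℝ) from funext hczero]
        exact hasSum_zero
      exact hkeyr.unique this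
    rw [hS0, ← hm, Real.zero_rpow (ne_of_gt hθpos)]
  · -- 0 < m : AM-GM argument
    have hterm : ∀ n, c n * r ^ (2 * n + 2)
        ≤ θ * m ^ (θ - 1) * (c n * r₁ ^ (2 * n + 2)) + (1 - θ) * m ^ θ * c n := by
      intro n
      set u : ℝ := r₁ ^ (2 * n + 2) with hudef
      have hu0 : 0 < u := by positivity
      have hupow : r ^ (2 * n + 2) = u ^ θ := by
        rw [hrθ, hudef]
        rw [← Real.rpow_natCast (r₁ ^ θ) (2 * n + 2), ← Real.rpow_natCast r₁ (2 * n + 2),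
          ← Real.rpow_mul hr₁0.le, ← Real.rpow_mul hr₁0.le, mul_comm]
      have hAMGM := Real.geom_mean_le_arith_mean2_weighted (w₁ := θ) (w₂ := 1 - θ)
        (p₁ := u / m) (p₂ := 1) hθpos.le (by linarith) (div_nonneg hu0.le hm.le)
        zero_le_one (by ring)
      rw [Real.one_rpow, mul_one, mul_one] at hAMGM
      have hdiv : (u / m) ^ θ = u ^ θ / m ^ θ := Real.div_rpow hu0.le hm.le θ
      rw [hdiv] at hAMGM
      have hmθ : 0 < m ^ θ := Real.rpow_pos_of_pos hm θ
      have hkey2 : u ^ θ ≤ θ * (u / m) * m ^ θ + (1 - θ) * m ^ θ := by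
        have := mul_le_mul_of_nonneg_right hAMGM hmθ.le
        rw [div_mul_cancel₀ _ (ne_of_gt hmθ), add_mul] at this
        linarith
      have hmθ1 : m ^ (θ - 1) = m ^ θ / m := Real.rpow_sub_one (ne_of_gt hm) θ
      have hkey3 : u ^ θ ≤ θ * m ^ (θ - 1) * u + (1 - θ) * m ^ θ := by
        rw [hmθ1]
        have : θ * (u / m) * m ^ θ = θ * (m ^ θ / m) * u := by
          field_simp
        linarith [hkey2, this.symm.le, this.le]
      calc c n * r ^ (2 * n + 2) = c n * u ^ θ := by rw [hupow]
        _ ≤ c n * (θ * m ^ (θ - 1) * u + (1 - θ) * m ^ θ) :=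
            mul_le_mul_of_nonneg_left hkey3 (hc0 n)
        _ = θ * m ^ (θ - 1) * (c n * u) + (1 - θ) * m ^ θ * c n := by ring
    -- sum up
    have hsummR : Summable (fun n => θ * m ^ (θ - 1) * (c n * r₁ ^ (2 * n + 2))
        + (1 - θ) * m ^ θ * c n) :=
      (hkey₁.summable.mul_left _).add (hcsummable.mul_left _)
    have hfinal : (∑' n, c n * r ^ (2 * n + 2)) ≤ m ^ θ := by
      calc (∑' n, c n * r ^ (2 * n + 2))
          ≤ ∑' n, (θ * m ^ (θ - 1) * (c n * r₁ ^ (2 * n + 2)) + (1 - θ) * m ^ θ * c n) :=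
            Summable.tsum_le_tsum hterm hkeyr.summable hsummR
        _ = θ * m ^ (θ - 1) * (∑' n, c n * r₁ ^ (2 * n + 2))
            + (1 - θ) * m ^ θ * (∑' n, c n) := by
            rw [Summable.tsum_add (hkey₁.summable.mul_left _) (hcsummable.mul_left _),
              tsum_mul_left, tsum_mul_left]
        _ ≤ θ * m ^ (θ - 1) * m + (1 - θ) * m ^ θ * 1 := by
            apply add_le_add
            · apply mul_le_mul_of_nonneg_left htsum₁
              have : 0 ≤ m ^ (θ - 1) := (Real.rpow_pos_of_pos hm _).le
              positivity
            · apply mul_le_mul_of_nonneg_left hctsum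
              have h1 : 0 ≤ 1 - θ := by linarith
              have h2 : 0 ≤ m ^ θ := (Real.rpow_pos_of_pos hm _).le
              positivity
        _ = m ^ θ := by
            rw [Real.rpow_sub_one (ne_of_gt hm)]
            field_simp
            ring
    rw [← hkeyr.tsum_eq]
    exact hfinal
end

section
/- Let f be analytic in the unit disk with S_f(r₁) ≤ m and S_f(1) ≤ 1 for some 0 < r₁ < 1 and 0 < m < 1. Then S_f(r) ≤ m^(log r / log r₁) for all r₁ ≤ r < 1. -/
open Metric MeasureTheory

namespace ThreeCirclesAux

open Complex

noncomputable def Complex.abs : AbsoluteValue ℂ ℝ where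
  toFun z := ‖z‖
  map_mul' := norm_mul
  nonneg' := norm_nonneg
  eq_zero' _ := norm_eq_zero
  add_le' := norm_add_le

theorem Complex.norm_eq_abs (z : ℂ) : ‖z‖ = Complex.abs z := rfl

theorem Complex.abs_ofReal (r : ℝ) : Complex.abs (r : ℂ) = |r| := Complex.norm_real r

theorem Complex.abs_conj (z : ℂ) : Complex.abs ((starRingEnd ℂ) z) = Complex.abs z :=
  Complex.norm_conj z

theorem Complex.abs_exp (z : ℂ) : Complex.abs (_root_.Complex.exp z) = Real.exp z.re :=
  Complex.norm_exp z

theorem Complex.normSq_eq_abs (z : ℂ) : Complex.normSq z = Complex.abs z ^ 2 :=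
  Complex.normSq_eq_norm_sq z

theorem Complex.re_le_abs (z : ℂ) : z.re ≤ Complex.abs z := Complex.re_le_norm z

theorem cov (q : ℂ → ℝ) (c : ℂ) (hc : c ≠ 0) :
    (Complex.abs c)^2 * ∫ w in ball (0:ℂ) 1, q (c * w) =
      ∫ z in ball (0:ℂ) (Complex.abs c), q z := by
  set t : ℝ := Complex.abs c with ht
  have ht0 : 0 < t := by simpa [ht] using (AbsoluteValue.pos Complex.abs hc)
  have htne : (t:ℂ) ≠ 0 := by exact_mod_cast ht0.ne'
  set u : ℂ := c / (t:ℂ) with hu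
  have hut : ∀ w : ℂ, c * w = t • (u * w) := by
    intro w
    rw [hu, Complex.real_smul]
    field_simp
  have huc : Complex.abs u = 1 := by
    rw [hu, map_div₀]
    simp only [Complex.abs_ofReal, abs_of_pos ht0]
    exact div_self ht0.ne'
  -- rotation
  set e : ℂ ≃ₗᵢ[ℝ] ℂ := rotation ⟨u, by simp [Submonoid.unitSphere, Circle, mem_sphere_zero_iff_norm, Complex.norm_eq_abs, huc]⟩ with he
  have hrot : ∀ w, e w = u * w := fun w => rotation_apply _ w
  have hmp : MeasurePreserving e volume volume := e.measurePreserving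
  have hemb : MeasurableEmbedding e := e.toHomeomorph.measurableEmbedding
  have hpre : e ⁻¹' (ball (0:ℂ) 1) = ball (0:ℂ) 1 := by
    rw [LinearIsometryEquiv.preimage_ball]
    simp
  have step1 : ∫ w in ball (0:ℂ) 1, q (c * w) =
      ∫ w in ball (0:ℂ) 1, q (t • w) := by
    have := hmp.setIntegral_preimage_emb hemb (fun z => q (t • z)) (ball (0:ℂ) 1)
    rw [hpre] at this
    rw [← this]
    congr 1 with w
    rw [hut w, hrot w]
  have step2 : ∫ w in ball (0:ℂ) 1, q (t • w)
      = (t ^ (2:ℕ))⁻¹ • ∫ z in ball (0:ℂ) t, q z := by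
    have := MeasureTheory.Measure.setIntegral_comp_smul_of_pos volume q (ball (0:ℂ) 1) ht0
    rw [this, smul_unitBall (ne_of_gt ht0 : (t:ℝ) ≠ 0)]
    simp [Complex.finrank_real_complex, Real.norm_of_nonneg ht0.le]
  rw [step1, step2, smul_eq_mul]
  field_simp

theorem cs (u v : ℂ → ℂ)
    (hu : AEStronglyMeasurable u (volume.restrict (ball (0:ℂ) 1)))
    (hv : AEStronglyMeasurable v (volume.restrict (ball (0:ℂ) 1)))
    (Cu Cv : ℝ) (hCu : ∀ w ∈ ball (0:ℂ) 1, Complex.abs (u w) ≤ Cu)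
    (hCv : ∀ w ∈ ball (0:ℂ) 1, Complex.abs (v w) ≤ Cv) :
    Complex.abs (∫ w in ball (0:ℂ) 1, u w * v w) ≤
      Real.sqrt (∫ w in ball (0:ℂ) 1, Complex.abs (u w) ^ 2) *
      Real.sqrt (∫ w in ball (0:ℂ) 1, Complex.abs (v w) ^ 2) := by
  have hfin : IsFiniteMeasure (volume.restrict (ball (0:ℂ) 1)) :=
    ⟨by rw [Measure.restrict_apply_univ]; exact measure_ball_lt_top⟩
  have hconj : Real.HolderConjugate 2 2 := by constructor <;> norm_num
  have hmu : MemLp u (ENNReal.ofReal 2) (volume.restrict (ball (0:ℂ) 1)) := by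
    apply MemLp.of_bound hu Cu
    filter_upwards [ae_restrict_mem measurableSet_ball] with w hw
    exact hCu w hw
  have hmv : MemLp v (ENNReal.ofReal 2) (volume.restrict (ball (0:ℂ) 1)) := by
    apply MemLp.of_bound hv Cv
    filter_upwards [ae_restrict_mem measurableSet_ball] with w hw
    exact hCv w hw
  have h1 := MeasureTheory.integral_mul_norm_le_Lp_mul_Lq hconj hmu hmv
  calc Complex.abs (∫ w in ball (0:ℂ) 1, u w * v w)
      ≤ ∫ w in ball (0:ℂ) 1, ‖u w * v w‖ := by
        exact norm_integral_le_integral_norm (fun w => u w * v w)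
    _ = ∫ w in ball (0:ℂ) 1, ‖u w‖ * ‖v w‖ := by simp [norm_mul]
    _ ≤ (∫ w in ball (0:ℂ) 1, ‖u w‖ ^ (2:ℝ)) ^ (1/(2:ℝ) : ℝ) *
        (∫ w in ball (0:ℂ) 1, ‖v w‖ ^ (2:ℝ)) ^ (1/(2:ℝ) : ℝ) := h1
    _ = Real.sqrt (∫ w in ball (0:ℂ) 1, Complex.abs (u w) ^ 2) *
        Real.sqrt (∫ w in ball (0:ℂ) 1, Complex.abs (v w) ^ 2) := by
        rw [Real.sqrt_eq_rpow, Real.sqrt_eq_rpow]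
        congr 1 <;> congr 1 <;>
        · apply integral_congr_ae; filter_upwards with w
          rw [Complex.norm_eq_abs, ← Real.rpow_natCast (Complex.abs _) 2]
          norm_num

-- bound on compact sub-disk
theorem bdd (h : ℂ → ℂ) (hc : ContinuousOn h (ball (0:ℂ) 1)) (κ : ℝ) (hκ : κ < 1) :
    ∃ C : ℝ, 0 ≤ C ∧ ∀ z : ℂ, Complex.abs z ≤ κ → Complex.abs (h z) ≤ C := by
  rcases lt_or_ge κ 0 with hκ0 | hκ0
  · exact ⟨0, le_refl 0, fun z hz => absurd (lt_of_le_of_lt hz hκ0) (not_lt.2 (Complex.abs.nonneg z))⟩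
  · have hcomp : IsCompact (closedBall (0:ℂ) κ) := isCompact_closedBall _ _
    have hsub : closedBall (0:ℂ) κ ⊆ ball (0:ℂ) 1 := closedBall_subset_ball (by linarith)
    obtain ⟨C, hC⟩ := hcomp.exists_bound_of_continuousOn (hc.mono hsub)
    refine ⟨max C 0, le_max_right _ _, fun z hz => ?_⟩
    have := hC z (by simpa [mem_closedBall, Complex.dist_eq] using (show ‖z‖ ≤ κ from hz))
    exact le_trans (by simpa [Complex.norm_eq_abs] using this) (le_max_left _ _)

set_option maxHeartbeats 1000000 in
theorem mainstep (g : ℂ → ℂ) (hga : AnalyticOnNhd ℂ g (ball (0:ℂ) 1))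
    (r₁ m r s : ℝ) (hr₁0 : 0 < r₁) (hr₁r : r₁ ≤ r) (hrs : r < s) (hs1 : s < 1)
    (hm0 : 0 < m) (hm1 : m < 1)
    (hA : ∀ t : ℝ, 0 < t → t < 1 → (∫ z in ball (0:ℂ) t, Complex.abs (g z)^2) ≤ Real.pi)
    (hA1 : (∫ z in ball (0:ℂ) r₁, Complex.abs (g z)^2) ≤ Real.pi * m) :
    (∫ z in ball (0:ℂ) r, Complex.abs (g z)^2) ≤
      Real.pi * m ^ ((Real.log s - Real.log r)/(Real.log s - Real.log r₁)) := by
  have hr0 : 0 < r := lt_of_lt_of_le hr₁0 hr₁r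
  have hs0 : 0 < s := lt_trans hr0 hrs
  have hr1 : r < 1 := lt_trans hrs hs1
  have hr₁1 : r₁ < 1 := lt_of_le_of_lt hr₁r hr1
  set a : ℝ := Real.log r₁ with ha
  set b : ℝ := Real.log s with hb
  have hab : a < b := Real.log_lt_log hr₁0 (lt_of_le_of_lt hr₁r hrs)
  set k : ℝ := b - a with hk
  have hk0 : 0 < k := sub_pos.2 hab
  have hb0 : b < 0 := Real.log_neg hs0 hs1
  have ha0 : a < 0 := Real.log_neg hr₁0 hr₁1
  have hlogr : a ≤ Real.log r := Real.log_le_log hr₁0 hr₁r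
  have hlogrb : Real.log r < b := Real.log_lt_log hr0 hrs
  set τ : ℝ := (Real.log r - a) / k with hτ
  have hτ0 : 0 ≤ τ := div_nonneg (by linarith) hk0.le
  have hτ1 : τ ≤ 1 := by
    rw [hτ, div_le_one hk0]; linarith
  -- the exponential radius function
  set c : ℂ → ℂ := fun ζ => Complex.exp ((a : ℂ) + ζ * (k : ℂ)) with hc
  have hcabs : ∀ ζ : ℂ, Complex.abs (c ζ) = Real.exp (a + ζ.re * k) := by
    intro ζ
    rw [hc]; rw [Complex.abs_exp]
    congr 1
    simp [Complex.add_re, Complex.mul_re]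
  have hc0 : ∀ ζ : ℂ, c ζ ≠ 0 := fun ζ => Complex.exp_ne_zero _
  have hcpos : ∀ ζ : ℂ, 0 < Complex.abs (c ζ) := by
    intro ζ; rw [hcabs]; exact Real.exp_pos _
  set s₂ : ℝ := Real.exp (b/2) with hs₂
  have hs₂1 : s₂ < 1 := Real.exp_lt_one_iff.2 (by linarith)
  have hss₂ : s < s₂ := by
    rw [hs₂, ← Real.exp_log hs0]
    exact Real.exp_lt_exp.2 (by linarith)
  have hs₂0 : 0 < s₂ := Real.exp_pos _
  set δ : ℝ := (-b) / (2*k) with hδ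
  have hδ0 : 0 < δ := div_pos (by linarith) (by linarith)
  have hcs₂ : ∀ ζ : ℂ, ζ.re < 1 + δ → Complex.abs (c ζ) < s₂ := by
    intro ζ hζ
    rw [hcabs, hs₂]
    apply Real.exp_lt_exp.2
    have : ζ.re * k < (1+δ)*k := by
      apply mul_lt_mul_of_pos_right hζ hk0
    have h2 : (1+δ)*k = k - b/(2) := by
      rw [hδ]; field_simp; ring
    nlinarith
  have hcle : ∀ ζ : ℂ, ζ.re ≤ 1 → Complex.abs (c ζ) ≤ s := by
    intro ζ hζ
    rw [hcabs, ← Real.exp_log hs0]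
    apply Real.exp_le_exp.2
    have : ζ.re * k ≤ k := by nlinarith
    have hbb : a + k = b := by rw [hk]; ring
    linarith
  have hclt1 : ∀ ζ : ℂ, ζ.re ≤ 1 → Complex.abs (c ζ) < 1 := fun ζ hζ =>
    lt_of_le_of_lt (hcle ζ hζ) hs1

  have hgc : ContinuousOn g (ball (0:ℂ) 1) := hga.differentiableOn.continuousOn
  have hg'c : ContinuousOn (deriv g) (ball (0:ℂ) 1) := hga.deriv.differentiableOn.continuousOn
  obtain ⟨Cg, hCg0, hCg⟩ := bdd g hgc s₂ hs₂1
  obtain ⟨Cg', hCg'0, hCg'⟩ := bdd (deriv g) hg'c s₂ hs₂1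
  set φ : ℂ → ℂ := fun w => (starRingEnd ℂ) ((r:ℂ) * g ((r:ℂ)*w)) with hφ
  obtain ⟨Cgr, hCgr0, hCgr⟩ := bdd g hgc r hr1
  have hφbd : ∀ w ∈ ball (0:ℂ) 1, Complex.abs (φ w) ≤ r * Cgr := by
    intro w hw
    rw [hφ]
    simp only [map_mul, Complex.abs_conj, Complex.abs_ofReal, abs_of_pos hr0]
    have h1 : Complex.abs ((r:ℂ)*w) ≤ r := by
      rw [map_mul, Complex.abs_ofReal, abs_of_pos hr0]
      exact mul_le_of_le_one_right hr0.le (mem_ball_zero_iff.1 hw).le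
    exact mul_le_mul_of_nonneg_left (hCgr _ h1) hr0.le
  -- continuity of the integrand pieces
  have hmul_cont : ∀ e : ℂ, Complex.abs e ≤ 1 → ContinuousOn (fun w => g (e * w)) (ball (0:ℂ) 1) := by
    intro e he
    apply hgc.comp (continuous_const.mul continuous_id).continuousOn
    intro w hw
    rw [mem_ball_zero_iff] at hw ⊢
    calc ‖e * w‖ = Complex.abs e * ‖w‖ := by simp [Complex.norm_eq_abs]
    _ ≤ 1 * ‖w‖ := mul_le_mul_of_nonneg_right he (norm_nonneg w)
    _ < 1 := by simpa using hw
  have hφcont : ContinuousOn φ (ball (0:ℂ) 1) := by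
    apply Complex.continuous_conj.comp_continuousOn
    exact continuousOn_const.mul (hmul_cont (r:ℂ) (by
      rw [Complex.abs_ofReal, abs_of_pos hr0]; exact hr1.le))
  have hucont : ∀ ζ : ℂ, Complex.abs (c ζ) ≤ 1 →
      ContinuousOn (fun w => c ζ * g (c ζ * w)) (ball (0:ℂ) 1) :=
    fun ζ hζ => (continuousOn_const.mul (hmul_cont (c ζ) hζ))
  have hmeas1 : ∀ ζ : ℂ, Complex.abs (c ζ) ≤ 1 →
      AEStronglyMeasurable (fun w => c ζ * g (c ζ * w))
        (volume.restrict (ball (0:ℂ) 1)) :=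
    fun ζ hζ => (hucont ζ hζ).aestronglyMeasurable measurableSet_ball
  have hφmeas : AEStronglyMeasurable φ (volume.restrict (ball (0:ℂ) 1)) :=
    hφcont.aestronglyMeasurable measurableSet_ball
  set G : ℂ → ℂ := fun ζ => ∫ w in ball (0:ℂ) 1, (c ζ * g (c ζ * w)) * φ w with hG
  set A : ℝ → ℝ := fun t => ∫ z in ball (0:ℂ) t, Complex.abs (g z)^2 with hA'
  have hAnn : ∀ t : ℝ, 0 ≤ A t := fun t => integral_nonneg (fun z => by positivity)
  -- squared integrals via change of variables
  have hubd : ∀ ζ : ℂ, ζ.re ≤ 1 → ∀ w ∈ ball (0:ℂ) 1,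
      Complex.abs (c ζ * g (c ζ * w)) ≤ Cg := by
    intro ζ hζ w hw
    rw [map_mul]
    have hcw : Complex.abs (c ζ * w) ≤ s₂ := by
      rw [map_mul]
      calc Complex.abs (c ζ) * Complex.abs w ≤ s * 1 := by
            apply mul_le_mul (hcle ζ hζ) (mem_ball_zero_iff.1 hw).le
              (Complex.abs.nonneg w) hs0.le
        _ ≤ s₂ := by rw [mul_one]; exact hss₂.le
    calc Complex.abs (c ζ) * Complex.abs (g (c ζ * w)) ≤ 1 * Cg :=
          mul_le_mul (hclt1 ζ hζ).le (hCg _ hcw) (Complex.abs.nonneg _) zero_le_one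
      _ = Cg := one_mul Cg
  have hsq1 : ∀ ζ : ℂ, (∫ w in ball (0:ℂ) 1, Complex.abs (c ζ * g (c ζ * w)) ^ 2)
      = A (Complex.abs (c ζ)) := by
    intro ζ
    have h2 := cov (fun z => Complex.abs (g z)^2) (c ζ) (hc0 ζ)
    calc (∫ w in ball (0:ℂ) 1, Complex.abs (c ζ * g (c ζ * w)) ^ 2)
        = (Complex.abs (c ζ))^2 * ∫ w in ball (0:ℂ) 1, Complex.abs (g (c ζ * w))^2 := by
          rw [← integral_const_mul]; congr 1 with w; rw [map_mul, mul_pow]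
      _ = A (Complex.abs (c ζ)) := h2
  have hsqφ : (∫ w in ball (0:ℂ) 1, Complex.abs (φ w) ^ 2) = A r := by
    have habs : Complex.abs ((r:ℂ)) = r := by rw [Complex.abs_ofReal, abs_of_pos hr0]
    have h2 := cov (fun z => Complex.abs (g z)^2) ((r:ℂ)) (by exact_mod_cast hr0.ne')
    rw [habs] at h2
    calc (∫ w in ball (0:ℂ) 1, Complex.abs (φ w) ^ 2)
        = r^2 * ∫ w in ball (0:ℂ) 1, Complex.abs (g ((r:ℂ) * w))^2 := by
          rw [← integral_const_mul]; congr 1 with w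
          rw [hφ]
          simp only [Complex.abs_conj, map_mul, mul_pow, Complex.abs_ofReal, abs_of_pos hr0]
      _ = A r := h2
  -- pointwise bound
  have hGbd : ∀ ζ : ℂ, ζ.re ≤ 1 →
      Complex.abs (G ζ) ≤ Real.sqrt (A (Complex.abs (c ζ))) * Real.sqrt (A r) := by
    intro ζ hζ
    have h1 : Complex.abs (c ζ) ≤ 1 := (hclt1 ζ hζ).le
    have hcs := cs (fun w => c ζ * g (c ζ * w)) φ (hmeas1 ζ h1) hφmeas Cg (r * Cgr)
      (hubd ζ hζ) hφbd
    rw [hsq1, hsqφ] at hcs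
    exact hcs

  -- generic bound for the integrand when |c ζ| ≤ s₂
  have hubd2 : ∀ ζ : ℂ, Complex.abs (c ζ) ≤ s₂ → ∀ w ∈ ball (0:ℂ) 1,
      Complex.abs ((c ζ * g (c ζ * w)) * φ w) ≤ Cg * (r * Cgr) := by
    intro ζ hζ w hw
    have hw1 : Complex.abs w ≤ 1 := (mem_ball_zero_iff.1 hw).le
    have hcw : Complex.abs (c ζ * w) ≤ s₂ := by
      rw [map_mul]
      calc Complex.abs (c ζ) * Complex.abs w ≤ s₂ * 1 :=
            mul_le_mul hζ hw1 (Complex.abs.nonneg w) hs₂0.le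
        _ = s₂ := mul_one _
    have e1 : Complex.abs (c ζ) ≤ 1 := hζ.trans hs₂1.le
    have e2 : Complex.abs (g (c ζ * w)) ≤ Cg := hCg _ hcw
    have e5 : Complex.abs (φ w) ≤ r * Cgr := hφbd w hw
    calc Complex.abs ((c ζ * g (c ζ * w)) * φ w)
        = Complex.abs (c ζ) * Complex.abs (g (c ζ * w)) * Complex.abs (φ w) := by
          simp [map_mul]
      _ ≤ 1 * Cg * (r * Cgr) := by gcongr
      _ = Cg * (r * Cgr) := by ring
  haveI hfinmeas : IsFiniteMeasure (volume.restrict (ball (0:ℂ) 1)) :=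
    ⟨by rw [Measure.restrict_apply_univ]; exact measure_ball_lt_top⟩
  -- continuity of w ↦ deriv g (e * w)
  have hmul_cont' : ∀ e : ℂ, Complex.abs e ≤ 1 →
      ContinuousOn (fun w => deriv g (e * w)) (ball (0:ℂ) 1) := by
    intro e he
    apply hg'c.comp (continuous_const.mul continuous_id).continuousOn
    intro w hw
    rw [mem_ball_zero_iff] at hw ⊢
    calc ‖e * w‖ = Complex.abs e * ‖w‖ := by simp [Complex.norm_eq_abs]
    _ ≤ 1 * ‖w‖ := mul_le_mul_of_nonneg_right he (norm_nonneg w)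
    _ < 1 := by simpa using hw
  -- the derivative integrand
  set F' : ℂ → ℂ → ℂ := fun ζ w =>
    (((k:ℂ) * c ζ) * g (c ζ * w) + c ζ * (deriv g (c ζ * w) * (((k:ℂ) * c ζ) * w))) * φ w
    with hF'
  set K : ℝ := (k * 1 * Cg + 1 * (Cg' * (k * 1 * 1))) * (r * Cgr) with hK
  have habsk : Complex.abs ((k:ℂ)) = k := by rw [Complex.abs_ofReal, abs_of_pos hk0]
  have hF'bd : ∀ ζ : ℂ, Complex.abs (c ζ) ≤ s₂ → ∀ w ∈ ball (0:ℂ) 1,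
      ‖F' ζ w‖ ≤ K := by
    intro ζ hζ w hw
    have hw1 : Complex.abs w ≤ 1 := (mem_ball_zero_iff.1 hw).le
    have hcw : Complex.abs (c ζ * w) ≤ s₂ := by
      rw [map_mul]
      calc Complex.abs (c ζ) * Complex.abs w ≤ s₂ * 1 :=
            mul_le_mul hζ hw1 (Complex.abs.nonneg w) hs₂0.le
        _ = s₂ := mul_one _
    have e1 : Complex.abs (c ζ) ≤ 1 := hζ.trans hs₂1.le
    have e2 : Complex.abs (g (c ζ * w)) ≤ Cg := hCg _ hcw
    have e3 : Complex.abs (deriv g (c ζ * w)) ≤ Cg' := hCg' _ hcw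
    have e5 : Complex.abs (φ w) ≤ r * Cgr := hφbd w hw
    rw [hF', Complex.norm_eq_abs]
    have step1 : Complex.abs ((((k:ℂ) * c ζ) * g (c ζ * w) + c ζ * (deriv g (c ζ * w) * (((k:ℂ) * c ζ) * w))) * φ w) ≤ (Complex.abs (((k:ℂ) * c ζ) * g (c ζ * w)) + Complex.abs (c ζ * (deriv g (c ζ * w) * (((k:ℂ) * c ζ) * w)))) * Complex.abs (φ w) := by
      rw [map_mul]
      exact mul_le_mul_of_nonneg_right (Complex.abs.add_le _ _) (Complex.abs.nonneg _)
    refine step1.trans ?_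
    simp only [map_mul, habsk]
    rw [hK]
    gcongr
  have hK0 : 0 ≤ K := by
    have := hF'bd 0 (by
      rw [hcabs]
      simp only [Complex.zero_re, zero_mul, add_zero]
      rw [hs₂]
      exact (Real.exp_le_exp.2 (by linarith)).trans (le_refl _)) 0 (by simp)
    exact le_trans (norm_nonneg _) this
  -- differentiability of G on { re < 1 + δ }
  have hDiff : ∀ ζ₀ : ℂ, ζ₀.re < 1 + δ → DifferentiableAt ℂ G ζ₀ := by
    intro ζ₀ hζ₀
    set ε : ℝ := 1 + δ - ζ₀.re with hε
    have hε0 : 0 < ε := by rw [hε]; linarith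
    have hmem : ∀ ζ : ℂ, ζ ∈ ball ζ₀ ε → Complex.abs (c ζ) ≤ s₂ := by
      intro ζ hζ
      apply (hcs₂ ζ _).le
      have h1 : Complex.abs (ζ - ζ₀) < ε := by
        rw [← Complex.norm_eq_abs, ← Complex.dist_eq]; exact mem_ball.1 hζ
      have h2 : (ζ - ζ₀).re ≤ Complex.abs (ζ - ζ₀) := Complex.re_le_abs _
      rw [Complex.sub_re] at h2
      rw [hε] at h1
      linarith
    have hζ₀mem : ζ₀ ∈ ball ζ₀ ε := mem_ball_self hε0
    have key := hasDerivAt_integral_of_dominated_loc_of_deriv_le (𝕜 := ℂ)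
      (μ := volume.restrict (ball (0:ℂ) 1))
      (F := fun ζ w => (c ζ * g (c ζ * w)) * φ w) (F' := F') (x₀ := ζ₀)
      (bound := fun _ => K) (ball_mem_nhds _ hε0)
      (Filter.eventually_of_mem (ball_mem_nhds _ hε0) (fun ζ hζ =>
        ((hucont ζ ((hmem ζ hζ).trans hs₂1.le)).mul hφcont).aestronglyMeasurable
          measurableSet_ball))
      (by
        refine memLp_one_iff_integrable.1 (MemLp.of_bound
          (((hucont ζ₀ ((hmem ζ₀ hζ₀mem).trans hs₂1.le)).mul
            hφcont).aestronglyMeasurable measurableSet_ball) (Cg * (r * Cgr)) ?_)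
        filter_upwards [ae_restrict_mem measurableSet_ball] with w hw
        exact hubd2 ζ₀ (hmem ζ₀ hζ₀mem) w hw)
      (by
        have hc1 : Complex.abs (c ζ₀) ≤ 1 := (hmem ζ₀ hζ₀mem).trans hs₂1.le
        have : ContinuousOn (F' ζ₀) (ball (0:ℂ) 1) := by
          rw [hF']
          apply ContinuousOn.mul _ hφcont
          apply ContinuousOn.add
          · exact continuousOn_const.mul (hmul_cont (c ζ₀) hc1)
          · exact continuousOn_const.mul ((hmul_cont' (c ζ₀) hc1).mul
              (continuous_const.mul continuous_id).continuousOn)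
        exact this.aestronglyMeasurable measurableSet_ball)
      (by
        filter_upwards [ae_restrict_mem measurableSet_ball] with w hw
        intro ζ hζ
        exact hF'bd ζ (hmem ζ hζ) w hw)
      (integrable_const K)
      (by
        filter_upwards [ae_restrict_mem measurableSet_ball] with w hw
        intro ζ hζ
        have hw1 : Complex.abs w < 1 := mem_ball_zero_iff.1 hw
        have hcwlt : c ζ * w ∈ ball (0:ℂ) 1 := by
          rw [mem_ball_zero_iff, Complex.norm_eq_abs, map_mul]
          calc Complex.abs (c ζ) * Complex.abs w ≤ s₂ * Complex.abs w :=
                mul_le_mul_of_nonneg_right (hmem ζ hζ) (Complex.abs.nonneg w)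
            _ ≤ 1 * Complex.abs w :=
                mul_le_mul_of_nonneg_right hs₂1.le (Complex.abs.nonneg w)
            _ < 1 := by simpa using hw1
        have hcder : HasDerivAt c ((k:ℂ) * c ζ) ζ := by
          have h0 : HasDerivAt (fun x : ℂ => (a:ℂ) + x * (k:ℂ)) ((k:ℂ)) ζ := by
            simpa using ((hasDerivAt_id ζ).mul_const ((k:ℂ))).const_add ((a:ℂ))
          have := h0.cexp
          rw [hc]
          exact this.congr_deriv (mul_comm _ _)
        have hcw' : HasDerivAt (fun x => c x * w) ((k:ℂ) * c ζ * w) ζ := hcder.mul_const w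
        have hgat : HasDerivAt g (deriv g (c ζ * w)) (c ζ * w) :=
          ((hga _ hcwlt).differentiableAt).hasDerivAt
        have hcomp := HasDerivAt.comp ζ hgat hcw'
        have h4 := hcder.mul hcomp
        have h5 := h4.mul_const (φ w)
        rw [hF']
        convert h5 using 1 <;> rfl)
    exact key.2.differentiableAt

  -- DiffContOnCl on the strip
  have hd : DiffContOnCl ℂ G (Complex.HadamardThreeLines.verticalStrip 0 1) := by
    constructor
    · intro ζ hζ
      have h1 : ζ.re ∈ Set.Ioo (0:ℝ) 1 := hζ
      exact (hDiff ζ (by linarith [h1.2])).differentiableWithinAt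
    · intro ζ hζ
      have h1 : closure (Complex.HadamardThreeLines.verticalStrip 0 1) ⊆
          Complex.HadamardThreeLines.verticalClosedStrip 0 1 := by
        apply closure_minimal
        · exact fun x hx => ⟨(Set.mem_Ioo.1 hx).1.le, (Set.mem_Ioo.1 hx).2.le⟩
        · exact isClosed_Icc.preimage Complex.continuous_re
      have h2 : ζ.re ∈ Set.Icc (0:ℝ) 1 := h1 hζ
      exact (hDiff ζ (by linarith [h2.2])).continuousAt.continuousWithinAt
  -- boundedness on closed strip
  have hπbd : ∀ ζ : ℂ, ζ.re ≤ 1 → Complex.abs (G ζ) ≤ Real.pi := by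
    intro ζ hζ
    refine (hGbd ζ hζ).trans ?_
    have h1 : A (Complex.abs (c ζ)) ≤ Real.pi := hA _ (hcpos ζ) (hclt1 ζ hζ)
    have h2 : A r ≤ Real.pi := hA r hr0 hr1
    calc Real.sqrt (A (Complex.abs (c ζ))) * Real.sqrt (A r)
        ≤ Real.sqrt Real.pi * Real.sqrt Real.pi :=
          mul_le_mul (Real.sqrt_le_sqrt h1) (Real.sqrt_le_sqrt h2)
            (Real.sqrt_nonneg _) (Real.sqrt_nonneg _)
      _ = Real.pi := Real.mul_self_sqrt Real.pi_pos.le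
  have hB : BddAbove ((norm ∘ G) '' Complex.HadamardThreeLines.verticalClosedStrip 0 1) := by
    refine ⟨Real.pi, ?_⟩
    rintro x ⟨ζ, hζ, rfl⟩
    have h2 : ζ.re ∈ Set.Icc (0:ℝ) 1 := hζ
    simpa [Complex.norm_eq_abs] using hπbd ζ h2.2
  -- edge bounds
  have hedge0 : ∀ ζ : ℂ, ζ ∈ Complex.re ⁻¹' {0} →
      ‖G ζ‖ ≤ Real.sqrt (Real.pi * m) * Real.sqrt (A r) := by
    intro ζ hζ
    have hre : ζ.re = 0 := hζ
    have hc1 : Complex.abs (c ζ) = r₁ := by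
      rw [hcabs, hre, zero_mul, add_zero, ha, Real.exp_log hr₁0]
    rw [Complex.norm_eq_abs]
    refine (hGbd ζ (by rw [hre]; linarith)).trans ?_
    rw [hc1]
    exact mul_le_mul_of_nonneg_right (Real.sqrt_le_sqrt hA1) (Real.sqrt_nonneg _)
  have hedge1 : ∀ ζ : ℂ, ζ ∈ Complex.re ⁻¹' {1} →
      ‖G ζ‖ ≤ Real.sqrt Real.pi * Real.sqrt (A r) := by
    intro ζ hζ
    have hre : ζ.re = 1 := hζ
    have hc1 : Complex.abs (c ζ) = s := by
      rw [hcabs, hre, one_mul, hk, ha]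
      have : a + (b - a) = b := by ring
      rw [ha] at this
      rw [this, hb, Real.exp_log hs0]
    rw [Complex.norm_eq_abs]
    refine (hGbd ζ (by rw [hre])).trans ?_
    rw [hc1]
    exact mul_le_mul_of_nonneg_right (Real.sqrt_le_sqrt (hA s hs0 hs1)) (Real.sqrt_nonneg _)
  -- membership of τ
  have hz : ((τ:ℝ):ℂ) ∈ Complex.HadamardThreeLines.verticalClosedStrip 0 1 := by
    show ((τ:ℝ):ℂ).re ∈ Set.Icc (0:ℝ) 1
    rw [Complex.ofReal_re]
    exact ⟨hτ0, hτ1⟩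
  have had := Complex.HadamardThreeLines.norm_le_interp_of_mem_verticalClosedStrip₀₁'
    G hz hd hB hedge0 hedge1
  -- value of G at τ
  have hcτ : c ((τ:ℝ):ℂ) = (r:ℂ) := by
    rw [hc]
    have h1 : (a:ℂ) + (τ:ℂ) * (k:ℂ) = ((a + τ * k : ℝ) : ℂ) := by push_cast; ring
    have h2 : a + τ * k = Real.log r := by rw [hτ]; field_simp; ring
    show Complex.exp ((a:ℂ) + (τ:ℂ) * (k:ℂ)) = (r:ℂ)
    rw [h1, h2, ← Complex.ofReal_exp, Real.exp_log hr0]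
  have hAr2 : (∫ w in ball (0:ℂ) 1, Complex.abs ((r:ℂ) * g ((r:ℂ)*w))^2) = A r := by
    rw [← hsqφ]
    congr 1 with w
    rw [hφ]
    simp only [Complex.abs_conj]
  have hGτ : G ((τ:ℝ):ℂ) = ((A r : ℝ) : ℂ) := by
    have h3 : G ((τ:ℝ):ℂ) = ∫ w in ball (0:ℂ) 1, ((r:ℂ) * g ((r:ℂ) * w)) * φ w := by
      rw [hG]
      simp only [hcτ]
    rw [h3]
    have h4 : ∀ w : ℂ, ((r:ℂ) * g ((r:ℂ) * w)) * φ w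
        = (((Complex.abs ((r:ℂ) * g ((r:ℂ)*w))^2 : ℝ)) : ℂ) := by
      intro w
      rw [hφ]
      show ((r:ℂ) * g ((r:ℂ) * w)) * (starRingEnd ℂ) ((r:ℂ) * g ((r:ℂ)*w)) = _
      rw [Complex.mul_conj, Complex.normSq_eq_abs]
    simp_rw [h4]
    calc ∫ w in ball (0:ℂ) 1, ((Complex.abs ((r:ℂ) * g ((r:ℂ)*w))^2 : ℝ) : ℂ)
        = ((∫ w in ball (0:ℂ) 1, Complex.abs ((r:ℂ) * g ((r:ℂ)*w))^2 : ℝ) : ℂ) :=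
          integral_ofReal
      _ = ((A r : ℝ) : ℂ) := by rw [hAr2]
  have hGval : ‖G ((τ:ℝ):ℂ)‖ = A r := by
    rw [hGτ, Complex.norm_eq_abs, Complex.abs_ofReal, _root_.abs_of_nonneg (hAnn r)]
  rw [hGval, Complex.ofReal_re] at had
  -- final algebra
  show A r ≤ Real.pi * m ^ ((b - Real.log r) / k)
  have hexp : (b - Real.log r)/k = 1 - τ := by
    rw [hτ]
    field_simp
    rw [hk]
    ring
  rw [hexp]
  rcases eq_or_lt_of_le (hAnn r) with h0 | hpos
  · rw [← h0]
    positivity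
  · set Y := Real.sqrt (A r) with hY
    have hY0 : 0 < Y := Real.sqrt_pos.2 hpos
    have hP0 : (0:ℝ) < Real.sqrt Real.pi := Real.sqrt_pos.2 Real.pi_pos
    have hM0 : (0:ℝ) < Real.sqrt m := Real.sqrt_pos.2 hm0
    have hsplit : Real.sqrt (Real.pi * m) = Real.sqrt Real.pi * Real.sqrt m :=
      Real.sqrt_mul Real.pi_pos.le m
    rw [hsplit] at had
    have e1 : (Real.sqrt Real.pi * Real.sqrt m * Y) ^ (1 - τ)
        = (Real.sqrt Real.pi)^(1-τ) * (Real.sqrt m)^(1-τ) * Y^(1-τ) := by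
      rw [Real.mul_rpow (by positivity) hY0.le, Real.mul_rpow hP0.le hM0.le]
    have e2 : (Real.sqrt Real.pi * Y) ^ τ = (Real.sqrt Real.pi)^τ * Y^τ :=
      Real.mul_rpow hP0.le hY0.le
    rw [e1, e2] at had
    have p1 : (Real.sqrt Real.pi)^(1-τ) * (Real.sqrt Real.pi)^τ = Real.sqrt Real.pi := by
      rw [← Real.rpow_add hP0]
      norm_num
    have p2 : Y^(1-τ) * Y^τ = Y := by
      rw [← Real.rpow_add hY0]
      norm_num
    have e3 : (Real.sqrt Real.pi)^(1-τ) * (Real.sqrt m)^(1-τ) * Y^(1-τ)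
        * ((Real.sqrt Real.pi)^τ * Y^τ)
        = Real.sqrt Real.pi * ((Real.sqrt m)^(1-τ) * Y) := by
      calc (Real.sqrt Real.pi)^(1-τ) * (Real.sqrt m)^(1-τ) * Y^(1-τ)
            * ((Real.sqrt Real.pi)^τ * Y^τ)
          = ((Real.sqrt Real.pi)^(1-τ) * (Real.sqrt Real.pi)^τ) * (Real.sqrt m)^(1-τ)
            * (Y^(1-τ) * Y^τ) := by ring
        _ = Real.sqrt Real.pi * ((Real.sqrt m)^(1-τ) * Y) := by rw [p1, p2]; ring
    rw [e3] at had
    have hY2 : A r = Y * Y := (Real.mul_self_sqrt (hAnn r)).symm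
    have hMτ : (0:ℝ) ≤ (Real.sqrt m)^(1-τ) := Real.rpow_nonneg hM0.le _
    have hstep : Y ≤ Real.sqrt Real.pi * (Real.sqrt m)^(1-τ) := by
      have h5 : Y * Y ≤ (Real.sqrt Real.pi * (Real.sqrt m)^(1-τ)) * Y := by
        rw [hY2] at had
        calc Y * Y ≤ Real.sqrt Real.pi * ((Real.sqrt m)^(1-τ) * Y) := had
          _ = (Real.sqrt Real.pi * (Real.sqrt m)^(1-τ)) * Y := by ring
      exact le_of_mul_le_mul_right h5 hY0
    have p3 : (Real.sqrt m)^(1-τ) * (Real.sqrt m)^(1-τ) = m ^ (1-τ) := by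
      rw [← Real.rpow_add hM0, Real.sqrt_eq_rpow, ← Real.rpow_mul hm0.le]
      congr 1
      ring
    have h2 : Y * Y ≤ (Real.sqrt Real.pi * (Real.sqrt m)^(1-τ))
        * (Real.sqrt Real.pi * (Real.sqrt m)^(1-τ)) :=
      mul_le_mul hstep hstep hY0.le (by positivity)
    rw [hY2]
    refine h2.trans_eq ?_
    calc (Real.sqrt Real.pi * (Real.sqrt m)^(1-τ)) * (Real.sqrt Real.pi * (Real.sqrt m)^(1-τ))
        = (Real.sqrt Real.pi * Real.sqrt Real.pi)
          * ((Real.sqrt m)^(1-τ) * (Real.sqrt m)^(1-τ)) := by ring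
      _ = Real.pi * m ^ (1-τ) := by rw [Real.mul_self_sqrt Real.pi_pos.le, p3]

end ThreeCirclesAux

open ThreeCirclesAux in
/-- Three circles type theorem for the area function of an analytic function. -/
theorem analytic_three_circles_area (f : ℂ → ℂ) (r₁ m : ℝ)
    (hf : DifferentiableOn ℂ f (ball (0 : ℂ) 1))
    (hr₁0 : 0 < r₁) (hr₁1 : r₁ < 1) (hm0 : 0 < m) (hm1 : m < 1)
    (hSr₁ : (Real.pi)⁻¹ *
        ∫ z in ball (0 : ℂ) r₁, ‖deriv f z‖ ^ 2 ≤ m)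
    (hS1 : ∀ r : ℝ, 0 < r → r < 1 →
      (Real.pi)⁻¹ * ∫ z in ball (0 : ℂ) r, ‖deriv f z‖ ^ 2 ≤ 1) :
    ∀ r : ℝ, r₁ ≤ r → r < 1 →
      (Real.pi)⁻¹ * ∫ z in ball (0 : ℂ) r, ‖deriv f z‖ ^ 2 ≤
        m ^ (Real.log r / Real.log r₁) := by
  intro r hrr₁ hr1
  set g := deriv f with hgdef
  have hga : AnalyticOnNhd ℂ g (ball (0:ℂ) 1) := (hf.analyticOnNhd isOpen_ball).deriv
  have hr0 : 0 < r := lt_of_lt_of_le hr₁0 hrr₁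
  have hπ : (0:ℝ) < Real.pi := Real.pi_pos
  have hA : ∀ t : ℝ, 0 < t → t < 1 →
      (∫ z in ball (0:ℂ) t, Complex.abs (g z)^2) ≤ Real.pi := by
    intro t ht0 ht1
    have h1 := hS1 t ht0 ht1
    have h2 : (∫ z in ball (0:ℂ) t, Complex.abs (g z)^2)
        = Real.pi * (Real.pi⁻¹ * ∫ z in ball (0:ℂ) t, Complex.abs (g z)^2) := by
      field_simp
    rw [h2]
    calc Real.pi * (Real.pi⁻¹ * ∫ z in ball (0:ℂ) t, Complex.abs (g z)^2)
        ≤ Real.pi * 1 := mul_le_mul_of_nonneg_left h1 hπ.le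
      _ = Real.pi := mul_one _
  have hA1 : (∫ z in ball (0:ℂ) r₁, Complex.abs (g z)^2) ≤ Real.pi * m := by
    have h2 : (∫ z in ball (0:ℂ) r₁, Complex.abs (g z)^2)
        = Real.pi * (Real.pi⁻¹ * ∫ z in ball (0:ℂ) r₁, Complex.abs (g z)^2) := by
      field_simp
    rw [h2]
    exact mul_le_mul_of_nonneg_left hSr₁ hπ.le
  have key : ∀ s : ℝ, r < s → s < 1 →
      (Real.pi)⁻¹ * (∫ z in ball (0:ℂ) r, Complex.abs (g z)^2)
        ≤ m ^ ((Real.log s - Real.log r)/(Real.log s - Real.log r₁)) := by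
    intro s hrs hs1
    have h := mainstep g hga r₁ m r s hr₁0 hrr₁ hrs hs1 hm0 hm1 hA hA1
    calc (Real.pi)⁻¹ * (∫ z in ball (0:ℂ) r, Complex.abs (g z)^2)
        ≤ (Real.pi)⁻¹ * (Real.pi * m ^ ((Real.log s - Real.log r)/(Real.log s - Real.log r₁))) :=
          mul_le_mul_of_nonneg_left h (inv_nonneg.2 hπ.le)
      _ = m ^ ((Real.log s - Real.log r)/(Real.log s - Real.log r₁)) := by
          field_simp
  -- limit as s → 1⁻
  have hlogr₁ : Real.log r₁ < 0 := Real.log_neg hr₁0 hr₁1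
  have hlog : Filter.Tendsto Real.log (nhdsWithin 1 (Set.Iio (1:ℝ))) (nhds 0) := by
    have h := (Real.continuousAt_log one_ne_zero).tendsto
    rw [Real.log_one] at h
    exact h.mono_left nhdsWithin_le_nhds
  have hquot : Filter.Tendsto
      (fun s : ℝ => (Real.log s - Real.log r)/(Real.log s - Real.log r₁))
      (nhdsWithin 1 (Set.Iio (1:ℝ))) (nhds (Real.log r / Real.log r₁)) := by
    have hnum := hlog.sub_const (Real.log r)
    have hden := hlog.sub_const (Real.log r₁)
    have h := hnum.div hden (by rw [zero_sub]; exact neg_ne_zero.2 hlogr₁.ne)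
    rw [zero_sub, zero_sub, neg_div_neg_eq] at h
    exact h
  have hlim : Filter.Tendsto
      (fun s : ℝ => m ^ ((Real.log s - Real.log r)/(Real.log s - Real.log r₁)))
      (nhdsWithin 1 (Set.Iio (1:ℝ))) (nhds (m ^ (Real.log r / Real.log r₁))) :=
    Filter.Tendsto.rpow tendsto_const_nhds hquot (Or.inl hm0.ne')
  refine ge_of_tendsto hlim ?_
  filter_upwards [Ioo_mem_nhdsLT_of_mem (⟨hr1, le_refl (1:ℝ)⟩ : (1:ℝ) ∈ Set.Ioc r 1)]
    with s hs
  exact key s hs.1 hs.2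
end

section
/- Let f = h + conj(g) be a sense-preserving K-quasiregular harmonic mapping on the unit disk with coefficients h(z) = Σ aₙ zⁿ, g(z) = Σ bₙ zⁿ. Then for every n ≥ 1, |aₙ| + |bₙ| ≤ K·l_f(1)/(2nπ), where l_f(1) = sup_{0<r<1} l_f(r) is assumed finite. If K = 1 the estimate is sharp, attained by f(z) = z. -/
open Metric MeasureTheory ComplexConjugate

namespace CoeffEst

open FormalMultilinearSeries Real

lemma lem1 (h : ℂ → ℂ) (a : ℕ → ℂ)
    (ha : ∀ z ∈ ball (0 : ℂ) 1, HasSum (fun n : ℕ => a n * z ^ n) (h z)) :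
    HasFPowerSeriesOnBall h (ofScalars ℂ a) 0 1 := by
  constructor
  · apply ENNReal.le_of_forall_nnreal_lt
    intro s hs
    have hs1 : (s : ℝ) < 1 := by exact_mod_cast hs
    have hmem : ((s : ℝ) : ℂ) ∈ ball (0 : ℂ) 1 := by
      simp [abs_of_nonneg s.coe_nonneg, hs1]
    have hsum := (ha _ hmem).summable
    have h2 := summable_norm_iff.mpr hsum
    apply FormalMultilinearSeries.le_radius_of_summable
    simp only [ofScalars_norm]
    simpa [norm_mul, norm_pow, abs_of_nonneg s.coe_nonneg, Complex.norm_real] using h2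
  · exact one_pos
  · intro y hy
    have hy2 : ‖y‖ < 1 := by
      have := mem_emetric_ball_zero_iff.mp hy
      rwa [← ofReal_norm, ENNReal.ofReal_lt_one] at this
    have hy' : y ∈ ball (0 : ℂ) 1 := mem_ball_zero_iff.mpr hy2
    simp only [ofScalars_apply_eq, smul_eq_mul, zero_add]
    exact ha y hy'

lemma lem2 (h : ℂ → ℂ) (a : ℕ → ℂ)
    (ha : ∀ z ∈ ball (0 : ℂ) 1, HasSum (fun n : ℕ => a n * z ^ n) (h z)) :
    ∃ q : FormalMultilinearSeries ℂ ℂ ℂ, HasFPowerSeriesOnBall (deriv h) q 0 1 ∧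
      ∀ m : ℕ, q.coeff m = ((m : ℂ) + 1) * a (m + 1) := by
  have hp := lem1 h a ha
  have hd := hp.fderiv
  have hA := (ContinuousLinearMap.apply ℂ ℂ (1 : ℂ)).comp_hasFPowerSeriesOnBall hd
  refine ⟨(ContinuousLinearMap.apply ℂ ℂ (1 : ℂ)).compFormalMultilinearSeries
      (ofScalars ℂ a).derivSeries, hA, ?_⟩
  intro m
  show ((ContinuousLinearMap.apply ℂ ℂ (1 : ℂ)).compFormalMultilinearSeries
      (ofScalars ℂ a).derivSeries) m (fun _ => 1) = _
  rw [ContinuousLinearMap.compFormalMultilinearSeries_apply]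
  simp only [ContinuousLinearMap.compContinuousMultilinearMap_coe, Function.comp_apply,
    ContinuousLinearMap.apply_apply]
  rw [derivSeries_apply_diag]
  rw [← Nat.cast_smul_eq_nsmul ℂ, smul_eq_mul, ofScalars_apply_eq]
  push_cast
  ring_nf

lemma contOn_deriv (h : ℂ → ℂ) (a : ℕ → ℂ)
    (ha : ∀ z ∈ ball (0 : ℂ) 1, HasSum (fun n : ℕ => a n * z ^ n) (h z)) :
    ContinuousOn (deriv h) (ball (0 : ℂ) 1) := by
  obtain ⟨q, hq, -⟩ := lem2 h a ha
  intro z hz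
  have hz1 : z ∈ Metric.eball (0 : ℂ) 1 := by
    rw [mem_emetric_ball_zero_iff]
    have : ‖z‖ < 1 := mem_ball_zero_iff.mp hz
    rw [← ofReal_norm, ENNReal.ofReal_lt_one]; exact this
  exact ((hq.analyticAt_of_mem hz1).differentiableAt).continuousAt.continuousWithinAt

lemma lem3 (h : ℂ → ℂ) (a : ℕ → ℂ)
    (ha : ∀ z ∈ ball (0 : ℂ) 1, HasSum (fun n : ℕ => a n * z ^ n) (h z))
    (n : ℕ) (hn : 1 ≤ n) (r : ℝ) (hr0 : 0 < r) (hr1 : r < 1) :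
    (n : ℝ) * ‖a n‖ * r ^ (n - 1) ≤
      (2 * π)⁻¹ * ∫ θ in (0:ℝ)..2 * π, ‖deriv h (circleMap 0 r θ)‖ := by
  obtain ⟨q, hq, hqc⟩ := lem2 h a ha
  have hdiff : DifferentiableOn ℂ (deriv h) (closedBall (0 : ℂ) r) := by
    intro z hz
    have hz1 : z ∈ Metric.eball (0 : ℂ) 1 := by
      rw [mem_emetric_ball_zero_iff]
      have : ‖z‖ ≤ r := by simpa using hz
      rw [← ofReal_norm, ENNReal.ofReal_lt_one]; exact this.trans_lt hr1
    exact ((hq.analyticAt_of_mem hz1).differentiableAt).differentiableWithinAt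
  set R : NNReal := r.toNNReal with hRdef
  have hR : (R : ℝ) = r := Real.coe_toNNReal _ hr0.le
  have hRpos : 0 < R := by
    rw [← NNReal.coe_lt_coe, hR]; exact hr0
  have hdiff' : DifferentiableOn ℂ (deriv h) (closedBall (0 : ℂ) (R : ℝ)) := by
    rw [hR]; exact hdiff
  have cp := hdiff'.hasFPowerSeriesOnBall hRpos
  have huniq : q = cauchyPowerSeries (deriv h) 0 (R : ℝ) :=
    hq.hasFPowerSeriesAt.eq_formalMultilinearSeries cp.hasFPowerSeriesAt
  rw [hR] at huniq
  set m : ℕ := n - 1 with hm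
  have hm1 : m + 1 = n := Nat.succ_pred_eq_of_pos hn
  have hcoeff : ((n : ℂ)) * a n = q.coeff m := by
    rw [hqc m, hm1]
    push_cast [← hm1]
    ring
  have key : (n : ℝ) * ‖a n‖ ≤
      ((2 * π)⁻¹ * ∫ θ in (0:ℝ)..2 * π, ‖deriv h (circleMap 0 r θ)‖) * |r|⁻¹ ^ m := by
    calc (n : ℝ) * ‖a n‖ = ‖((n : ℂ)) * a n‖ := by
          simp [map_mul]
      _ = ‖q.coeff m‖ := by rw [hcoeff]
      _ = ‖q m‖ := (q.norm_apply_eq_norm_coef (n := m)).symm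
      _ = ‖cauchyPowerSeries (deriv h) 0 r m‖ := by rw [huniq]
      _ ≤ _ := norm_cauchyPowerSeries_le _ _ _ _
  have hrm : (0:ℝ) ≤ r ^ m := pow_nonneg hr0.le m
  rw [abs_of_pos hr0] at key
  calc (n : ℝ) * ‖a n‖ * r ^ (n-1)
      = ((n : ℝ) * ‖a n‖) * r ^ m := by rw [hm]
    _ ≤ (((2 * π)⁻¹ * ∫ θ in (0:ℝ)..2 * π, ‖deriv h (circleMap 0 r θ)‖) * r⁻¹ ^ m) * r ^ m :=
        mul_le_mul_of_nonneg_right key hrm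
    _ = (2 * π)⁻¹ * ∫ θ in (0:ℝ)..2 * π, ‖deriv h (circleMap 0 r θ)‖ := by
        rw [mul_assoc, ← mul_pow, inv_mul_cancel₀ hr0.ne', one_pow, mul_one]
    _ = (2 * π)⁻¹ * ∫ θ in (0:ℝ)..2 * π, ‖deriv h (circleMap 0 r θ)‖ := by
        simp

end CoeffEst

/-- Coefficient estimates for sense-preserving `K`-quasiregular harmonic mappings
`f = h + conj g` with bounded length function: `|aₙ| + |bₙ| ≤ K l_f(1) / (2nπ)`. -/
theorem coefficient_estimate (h g : ℂ → ℂ) (a b : ℕ → ℂ) (K L : ℝ) (hK : 1 ≤ K)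
    (hh : DifferentiableOn ℂ h (ball (0 : ℂ) 1))
    (hg : DifferentiableOn ℂ g (ball (0 : ℂ) 1))
    (ha : ∀ z ∈ ball (0 : ℂ) 1, HasSum (fun n : ℕ => a n * z ^ n) (h z))
    (hb : ∀ z ∈ ball (0 : ℂ) 1, HasSum (fun n : ℕ => b n * z ^ n) (g z))
    (hsp : ∀ z ∈ ball (0 : ℂ) 1, ‖deriv g z‖ < ‖deriv h z‖)
    (hqr : ∀ z ∈ ball (0 : ℂ) 1,
      ‖deriv h z‖ + ‖deriv g z‖ ≤
        K * (‖deriv h z‖ - ‖deriv g z‖))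
    (hL : ∀ r : ℝ, 0 < r → r < 1 →
      r * ∫ θ in (0 : ℝ)..(2 * Real.pi),
          ‖deriv h ((r : ℂ) * Complex.exp (θ * Complex.I)) -
            Complex.exp (-2 * θ * Complex.I) *
              conj (deriv g ((r : ℂ) * Complex.exp (θ * Complex.I)))‖ ≤ L) :
    ∀ n : ℕ, 1 ≤ n →
      ‖a n‖ + ‖b n‖ ≤ K * L / (2 * n * Real.pi) := by
  intro n hn
  have hπ : (0:ℝ) < Real.pi := Real.pi_pos
  have hK0 : (0:ℝ) ≤ K := le_trans zero_le_one hK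
  have hn' : (0:ℝ) < (n:ℝ) := by exact_mod_cast hn
  set S : ℝ := ‖a n‖ + ‖b n‖ with hS
  have key : ∀ r : ℝ, 0 < r → r < 1 → (n : ℝ) * S * r ^ n ≤ K * L / (2 * Real.pi) := by
    intro r hr0 hr1
    have hmem : ∀ θ : ℝ, circleMap 0 r θ ∈ ball (0 : ℂ) 1 := by
      intro θ
      simp only [mem_ball_zero_iff, norm_circleMap_zero,
        abs_of_pos hr0]
      exact hr1
    have hcm : Continuous (circleMap 0 r) := continuous_circleMap 0 r
    have hCh : ContinuousOn (deriv h) (ball (0:ℂ) 1) := CoeffEst.contOn_deriv h a ha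
    have hCg : ContinuousOn (deriv g) (ball (0:ℂ) 1) := CoeffEst.contOn_deriv g b hb
    have ch : Continuous fun θ : ℝ => deriv h (circleMap 0 r θ) :=
      hCh.comp_continuous hcm hmem
    have cg : Continuous fun θ : ℝ => deriv g (circleMap 0 r θ) :=
      hCg.comp_continuous hcm hmem
    have cF : Continuous fun θ : ℝ => ‖deriv h (circleMap 0 r θ)‖ :=
      continuous_norm.comp ch
    have cG : Continuous fun θ : ℝ => ‖deriv g (circleMap 0 r θ)‖ :=
      continuous_norm.comp cg
    have ce : Continuous fun θ : ℝ => Complex.exp (-2 * (θ:ℂ) * Complex.I) := by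
      fun_prop
    have cJ : Continuous fun θ : ℝ => ‖deriv h (circleMap 0 r θ) -
        Complex.exp (-2 * (θ:ℂ) * Complex.I) * conj (deriv g (circleMap 0 r θ))‖ := by
      apply continuous_norm.comp
      exact ch.sub (ce.mul (Complex.continuous_conj.comp cg))
    -- pointwise inequality
    have pt : ∀ θ ∈ Set.Icc (0:ℝ) (2*Real.pi),
        ‖deriv h (circleMap 0 r θ)‖ + ‖deriv g (circleMap 0 r θ)‖ ≤
          K * ‖deriv h (circleMap 0 r θ) -
            Complex.exp (-2 * (θ:ℂ) * Complex.I) * conj (deriv g (circleMap 0 r θ))‖ := by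
      intro θ _
      set z := circleMap 0 r θ with hz
      have h1 := hqr z (hmem θ)
      have habs : ‖Complex.exp (-2 * (θ:ℂ) * Complex.I) * conj (deriv g z)‖ =
          ‖deriv g z‖ := by
        rw [norm_mul]
        simp [Complex.norm_exp, Complex.norm_conj]
      have h2 : ‖deriv h z‖ - ‖deriv g z‖ ≤
          ‖deriv h z - Complex.exp (-2 * (θ:ℂ) * Complex.I) * conj (deriv g z)‖ := by
        rw [← habs]
        exact
          norm_sub_norm_le (deriv h z) (Complex.exp (-2 * (θ:ℂ) * Complex.I) * conj (deriv g z))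
      exact h1.trans (mul_le_mul_of_nonneg_left h2 hK0)
    have h2π : (0:ℝ) ≤ 2 * Real.pi := by positivity
    have intmono := intervalIntegral.integral_mono_on h2π
      ((cF.add cG).intervalIntegrable (μ := volume) 0 (2*Real.pi))
      ((continuous_const.mul cJ).intervalIntegrable (μ := volume) 0 (2*Real.pi)) pt
    simp only [Pi.add_apply, Pi.mul_apply] at intmono
    rw [intervalIntegral.integral_add (cF.intervalIntegrable (μ := volume) 0 (2*Real.pi))
      (cG.intervalIntegrable (μ := volume) 0 (2*Real.pi)), intervalIntegral.integral_const_mul] at intmono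
    -- identify with circleMap form and use hL
    have hLr := hL r hr0 hr1
    have hLr' : r * ∫ θ in (0:ℝ)..(2*Real.pi),
        ‖deriv h (circleMap 0 r θ) -
          Complex.exp (-2 * (θ:ℂ) * Complex.I) * conj (deriv g (circleMap 0 r θ))‖ ≤ L := by
      simpa only [← circleMap_zero] using hLr
    set J : ℝ := ∫ θ in (0:ℝ)..(2*Real.pi),
        ‖deriv h (circleMap 0 r θ) -
          Complex.exp (-2 * (θ:ℂ) * Complex.I) * conj (deriv g (circleMap 0 r θ))‖ with hJ
    have hJ0 : 0 ≤ J := by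
      rw [hJ]
      apply intervalIntegral.integral_nonneg h2π
      intro θ _
      exact norm_nonneg _
    have hJL : J ≤ L / r := by
      rw [le_div_iff₀ hr0, mul_comm]
      exact hLr'
    have ka := CoeffEst.lem3 h a ha n hn r hr0 hr1
    have kb := CoeffEst.lem3 g b hb n hn r hr0 hr1
    have hsum : (n:ℝ) * S * r ^ (n-1) ≤ (2*Real.pi)⁻¹ * (K * J) := by
      have e1 : (n:ℝ) * S * r ^ (n-1) = (n:ℝ) * ‖a n‖ * r ^ (n-1)
          + (n:ℝ) * ‖b n‖ * r ^ (n-1) := by rw [hS]; ring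
      rw [e1]
      have e2 := add_le_add ka kb
      rw [← mul_add] at e2
      refine e2.trans ?_
      have : (∫ θ in (0:ℝ)..2*Real.pi, ‖deriv h (circleMap 0 r θ)‖) +
          ∫ θ in (0:ℝ)..2*Real.pi, ‖deriv g (circleMap 0 r θ)‖ ≤ K * J := intmono
      exact mul_le_mul_of_nonneg_left this (by positivity)
    have hfin : (n:ℝ) * S * r ^ (n-1) ≤ (2*Real.pi)⁻¹ * (K * (L / r)) := by
      refine hsum.trans ?_
      have : K * J ≤ K * (L / r) := mul_le_mul_of_nonneg_left hJL hK0
      exact mul_le_mul_of_nonneg_left this (by positivity)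
    have := mul_le_mul_of_nonneg_right hfin hr0.le
    obtain ⟨m, rfl⟩ : ∃ m, n = m + 1 := ⟨n - 1, (Nat.succ_pred_eq_of_pos hn).symm⟩
    calc ((m+1 : ℕ) : ℝ) * S * r ^ (m+1) = (((m+1:ℕ):ℝ) * S * r ^ (m + 1 - 1)) * r := by
          simp only [Nat.add_sub_cancel]; ring
      _ ≤ ((2*Real.pi)⁻¹ * (K * (L / r))) * r := this
      _ = K * L / (2 * Real.pi) := by field_simp
  -- take the limit r → 1⁻
  have cont : Continuous fun r : ℝ => (n:ℝ) * S * r ^ n := by fun_prop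
  have tend : Filter.Tendsto (fun r : ℝ => (n:ℝ) * S * r ^ n)
      (nhdsWithin 1 (Set.Iio 1)) (nhds ((n:ℝ) * S * 1 ^ n)) :=
    (cont.tendsto 1).mono_left nhdsWithin_le_nhds
  have ev : ∀ᶠ r in nhdsWithin (1:ℝ) (Set.Iio 1), (n:ℝ) * S * r ^ n ≤ K * L / (2 * Real.pi) := by
    filter_upwards [self_mem_nhdsWithin,
      mem_nhdsWithin_of_mem_nhds (eventually_gt_nhds zero_lt_one)] with r hr1 hr0
    exact key r hr0 hr1
  have lim := le_of_tendsto tend ev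
  rw [one_pow, mul_one] at lim
  have h2 := (le_div_iff₀ (by positivity : (0:ℝ) < 2 * Real.pi)).mp lim
  rw [le_div_iff₀ (by positivity : (0:ℝ) < 2 * (n:ℝ) * Real.pi)]
  calc S * (2 * (n:ℝ) * Real.pi) = (n:ℝ) * S * (2 * Real.pi) := by ring
    _ ≤ K * L := h2
end

section
/- Let f be a sense-preserving K-quasiregular harmonic mapping on the unit disk with l_f(1) = sup_{0<r<1} l_f(r) < ∞. Then Λ_f(z) ≤ l_f(1)·√K / (2π(1 − |z|)) for all z in 𝔻. Consequently f is a harmonic Bloch mapping with Bloch number β_f ≤ l_f(1)·√K/π. -/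
open Metric MeasureTheory ComplexConjugate

lemma conj_intervalIntegral (a b : ℝ) (f : ℝ → ℂ) :
    (∫ x in a..b, conj (f x)) = conj (∫ x in a..b, f x) := by
  have h1 : (∫ x in a..b, conj (f x)) =
      (∫ x in Set.Ioc a b, conj (f x)) - ∫ x in Set.Ioc b a, conj (f x) := rfl
  have h2 : (∫ x in a..b, f x) =
      (∫ x in Set.Ioc a b, f x) - ∫ x in Set.Ioc b a, f x := rfl
  rw [h1, h2, map_sub, integral_conj, integral_conj]

lemma core (H G : ℂ → ℂ) (z : ℂ) (r : ℝ)
    (hH : DifferentiableOn ℂ H (ball (0:ℂ) 1))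
    (hG : DifferentiableOn ℂ G (ball (0:ℂ) 1))
    (hzr : ‖z‖ < r) (hr1 : r < 1) :
    (r - ‖z‖) * (2 * Real.pi * ‖H z‖) ≤
      r * ∫ θ in (0:ℝ)..(2 * Real.pi),
        ‖H ((r : ℂ) * Complex.exp (θ * Complex.I)) -
          Complex.exp (-2 * θ * Complex.I) *
            conj (G ((r : ℂ) * Complex.exp (θ * Complex.I)))‖ := by
  have hρ0 : 0 ≤ ‖z‖ := norm_nonneg z
  have hr0 : 0 < r := lt_of_le_of_lt hρ0 hzr
  have hsub : closedBall (0:ℂ) r ⊆ ball (0:ℂ) 1 := closedBall_subset_ball hr1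
  -- Cauchy formula for H
  have hcau : (∮ w in C(0, r), (w - z)⁻¹ • H w) = (2 * Real.pi * Complex.I : ℂ) • H z :=
    (hH.mono hsub).circleIntegral_sub_inv_smul (by simpa [mem_ball_zero_iff] using hzr)
  set w : ℝ → ℂ := fun θ => circleMap 0 r θ with hwdef
  have habsw : ∀ θ, ‖w θ‖ = r := fun θ => by
    simp [hwdef, norm_circleMap_zero, abs_of_pos hr0]
  have hwmem : ∀ θ, w θ ∈ ball (0:ℂ) 1 := fun θ => by
    simp only [mem_ball_zero_iff, habsw]; exact hr1
  have hwz : ∀ θ, w θ - z ≠ 0 := by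
    intro θ h
    have : w θ = z := sub_eq_zero.mp h
    rw [← this, habsw θ] at hzr; exact lt_irrefl _ hzr
  have hwzlb : ∀ θ, r - ‖z‖ ≤ ‖w θ - z‖ := by
    intro θ
    have := norm_sub_norm_le (w θ) z
    simpa [habsw θ] using this
  -- continuity
  have hwcont : Continuous w := continuous_circleMap 0 r
  have hHcont : Continuous fun θ => H (w θ) :=
    hH.continuousOn.comp_continuous hwcont hwmem
  have hGcont : Continuous fun θ => G (w θ) :=
    hG.continuousOn.comp_continuous hwcont hwmem
  have hinv : Continuous fun θ => (w θ - z)⁻¹ :=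
    (hwcont.sub continuous_const).inv₀ hwz
  have hexp : Continuous fun θ : ℝ => Complex.exp (-2 * θ * Complex.I) := by
    fun_prop
  set A : ℝ → ℂ := fun θ => (w θ * Complex.I) * ((w θ - z)⁻¹ * H (w θ)) with hAdef
  set B : ℝ → ℂ := fun θ => (w θ * Complex.I) *
    ((w θ - z)⁻¹ * (Complex.exp (-2 * θ * Complex.I) * conj (G (w θ)))) with hBdef
  have hAcont : Continuous A := (hwcont.mul continuous_const).mul (hinv.mul hHcont)
  have hBcont : Continuous B := (hwcont.mul continuous_const).mul
    (hinv.mul (hexp.mul (Complex.continuous_conj.comp hGcont)))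
  have hAint : (∫ θ in (0:ℝ)..(2 * Real.pi), A θ) = (2 * Real.pi * Complex.I : ℂ) * H z := by
    rw [show (2 * Real.pi * Complex.I : ℂ) * H z = (2 * Real.pi * Complex.I : ℂ) • H z from rfl,
      ← hcau]
    simp only [circleIntegral, deriv_circleMap, smul_eq_mul, hAdef, hwdef]
    try exact intervalIntegral.integral_congr fun θ _ => by ring
  -- the antiholomorphic part vanishes
  set F : ℂ → ℂ := fun ζ => -(ζ * G ζ) / ((r:ℂ)^2 - conj z * ζ) with hFdef
  have hden : ∀ ζ : ℂ, ‖ζ‖ ≤ r → ((r:ℂ)^2 - conj z * ζ) ≠ 0 := by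
    intro ζ hζ h
    have h1 : (r:ℂ)^2 = conj z * ζ := by linear_combination h
    have h2 : ‖(r:ℂ)^2‖ = ‖conj z * ζ‖ := by rw [h1]
    rw [norm_pow, norm_mul, Complex.norm_conj, Complex.norm_real, Real.norm_eq_abs, abs_of_pos hr0] at h2
    nlinarith [norm_nonneg ζ]
  have hFd : ∀ ζ ∈ closedBall (0:ℂ) r, DifferentiableAt ℂ F ζ := by
    intro ζ hζ
    have hζ1 : ζ ∈ ball (0:ℂ) 1 := hsub hζ
    have hGd : DifferentiableAt ℂ G ζ := hG.differentiableAt (isOpen_ball.mem_nhds hζ1)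
    have hζr : ‖ζ‖ ≤ r := by
      simpa using mem_closedBall_zero_iff.mp hζ
    exact ((differentiableAt_id.mul hGd).neg).div
      ((differentiableAt_const _).sub ((differentiableAt_const _).mul differentiableAt_id))
      (hden ζ hζr)
  have hF0 : (∮ ζ in C(0, r), F ζ) = 0 :=
    Complex.circleIntegral_eq_zero_of_differentiable_on_off_countable hr0.le Set.countable_empty
      (fun ζ hζ => (hFd ζ hζ).continuousAt.continuousWithinAt)
      (fun ζ hζ => hFd ζ (ball_subset_closedBall hζ.1))
  have hptw : ∀ θ : ℝ, conj (B θ) = deriv (circleMap 0 r) θ • F (circleMap 0 r θ) := by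
    intro θ
    have hE : Complex.exp (θ * Complex.I) ≠ 0 := Complex.exp_ne_zero _
    have hcE : conj (Complex.exp ((θ:ℂ) * Complex.I)) = (Complex.exp ((θ:ℂ) * Complex.I))⁻¹ := by
      rw [← Complex.exp_conj, ← Complex.exp_neg]
      congr 1
      simp [Complex.conj_I]
    have hc2 : conj (Complex.exp (-2 * (θ:ℂ) * Complex.I)) =
        Complex.exp ((θ:ℂ) * Complex.I) * Complex.exp ((θ:ℂ) * Complex.I) := by
      rw [← Complex.exp_conj, ← Complex.exp_add]
      congr 1
      simp only [map_mul, map_neg, map_ofNat, Complex.conj_ofReal, Complex.conj_I]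
      try ring
    have hd1 : ((r:ℂ)^2 - conj z * ((r:ℂ) * Complex.exp ((θ:ℂ) * Complex.I))) ≠ 0 := by
      apply hden
      rw [norm_mul, Complex.norm_real, Real.norm_eq_abs, Complex.norm_exp_ofReal_mul_I, abs_of_pos hr0, mul_one]
    have hd2 : ((r:ℂ) * (Complex.exp ((θ:ℂ) * Complex.I))⁻¹ - conj z) ≠ 0 := by
      have : ((r:ℂ) * (Complex.exp ((θ:ℂ) * Complex.I))⁻¹ - conj z)
          = conj (w θ - z) := by
        simp [hwdef, circleMap, map_sub, map_mul, hcE, Complex.conj_ofReal]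
      rw [this]
      exact fun hcon => hwz θ (by simpa using congrArg (starRingEnd ℂ) hcon)
    have hd3 : ((r:ℂ) - conj z * Complex.exp ((θ:ℂ) * Complex.I)) ≠ 0 := by
      intro hcon
      apply hd1
      have : (r:ℂ)^2 - conj z * ((r:ℂ) * Complex.exp ((θ:ℂ) * Complex.I))
          = (r:ℂ) * ((r:ℂ) - conj z * Complex.exp ((θ:ℂ) * Complex.I)) := by ring
      rw [this, hcon, mul_zero]
    have hd4 : ((r:ℂ) * Complex.exp ((θ:ℂ) * Complex.I)
        - Complex.exp ((θ:ℂ) * Complex.I)^2 * conj z) ≠ 0 := by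
      have : ((r:ℂ) * Complex.exp ((θ:ℂ) * Complex.I)
          - Complex.exp ((θ:ℂ) * Complex.I)^2 * conj z)
          = Complex.exp ((θ:ℂ) * Complex.I) *
            ((r:ℂ) - conj z * Complex.exp ((θ:ℂ) * Complex.I)) := by ring
      rw [this]
      exact mul_ne_zero hE hd3
    simp only [hBdef, hwdef, circleMap, zero_add, deriv_circleMap, smul_eq_mul, hFdef,
      map_mul, map_sub, map_inv₀, Complex.conj_conj, Complex.conj_I, Complex.conj_ofReal,
      hcE, hc2]
    set E := Complex.exp ((θ:ℂ) * Complex.I) with hEdef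
    have hrC : (r:ℂ) ≠ 0 := by exact_mod_cast hr0.ne'
    rw [show ((r:ℂ) * E⁻¹ - conj z) = E⁻¹ * ((r:ℂ) - conj z * E) by field_simp <;> ring,
      mul_inv, inv_inv,
      show ((r:ℂ)^2 - conj z * ((r:ℂ) * E)) = (r:ℂ) * ((r:ℂ) - conj z * E) by ring]
    field_simp [hE, hd3, hrC]
  have hBint : (∫ θ in (0:ℝ)..(2 * Real.pi), B θ) = 0 := by
    have h1 : (∫ θ in (0:ℝ)..(2 * Real.pi), conj (B θ)) = 0 := by
      rw [← hF0]
      simp only [circleIntegral]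
      exact intervalIntegral.integral_congr fun θ _ => hptw θ
    rw [conj_intervalIntegral] at h1
    exact star_eq_zero.mp h1
  -- assemble
  have hwE : ∀ θ : ℝ, w θ = (r : ℂ) * Complex.exp ((θ:ℂ) * Complex.I) := fun θ => by
    simp [hwdef, circleMap]
  set D : ℝ → ℂ := fun θ => H ((r : ℂ) * Complex.exp ((θ:ℂ) * Complex.I)) -
    Complex.exp (-2 * θ * Complex.I) *
      conj (G ((r : ℂ) * Complex.exp ((θ:ℂ) * Complex.I))) with hDdef
  have hABD : ∀ θ, A θ - B θ = (w θ * Complex.I) * ((w θ - z)⁻¹ * D θ) := by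
    intro θ
    simp only [hAdef, hBdef, hDdef, ← hwE θ]
    ring
  have hDabs : Continuous fun θ => ‖D θ‖ := by
    refine continuous_norm.comp ?_
    have : D = fun θ => H (w θ) - Complex.exp (-2 * θ * Complex.I) * conj (G (w θ)) := by
      funext θ; rw [hDdef]; simp only [← hwE θ]
    rw [this]
    exact hHcont.sub (hexp.mul (Complex.continuous_conj.comp hGcont))
  have h2π : (0:ℝ) ≤ 2 * Real.pi := by positivity
  have hrρ : 0 < r - ‖z‖ := by linarith
  have hsum : (∫ θ in (0:ℝ)..(2 * Real.pi), (A θ - B θ)) =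
      (2 * Real.pi * Complex.I : ℂ) * H z := by
    rw [intervalIntegral.integral_sub (hAcont.intervalIntegrable _ _)
      (hBcont.intervalIntegrable _ _), hAint, hBint, sub_zero]
  have hnorm1 : 2 * Real.pi * ‖H z‖ =
      ‖∫ θ in (0:ℝ)..(2 * Real.pi), (A θ - B θ)‖ := by
    rw [hsum]
    simp only [norm_mul, Complex.norm_I, Complex.norm_real, Real.norm_eq_abs,
      Complex.norm_two, abs_of_pos Real.pi_pos]
    ring
  have hbound : ∀ θ, ‖A θ - B θ‖ ≤ (r * (r - ‖z‖)⁻¹) * ‖D θ‖ := by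
    intro θ
    have h1 : (‖w θ - z‖)⁻¹ ≤ (r - ‖z‖)⁻¹ :=
      inv_anti₀ hrρ (hwzlb θ)
    calc ‖A θ - B θ‖ = r * (‖w θ - z‖)⁻¹ * ‖D θ‖ := by
          rw [hABD θ]
          simp only [norm_mul, norm_inv, habsw θ, Complex.norm_I]
          ring
      _ ≤ r * (r - ‖z‖)⁻¹ * ‖D θ‖ := by
          exact mul_le_mul_of_nonneg_right
            (mul_le_mul_of_nonneg_left h1 hr0.le) (norm_nonneg _)
      _ = (r * (r - ‖z‖)⁻¹) * ‖D θ‖ := by ring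
  have hkey : 2 * Real.pi * ‖H z‖ ≤
      (r * (r - ‖z‖)⁻¹) *
        ∫ θ in (0:ℝ)..(2 * Real.pi), ‖D θ‖ := by
    rw [hnorm1]
    calc ‖∫ θ in (0:ℝ)..(2 * Real.pi), (A θ - B θ)‖
        ≤ ∫ θ in (0:ℝ)..(2 * Real.pi), ‖A θ - B θ‖ :=
          intervalIntegral.norm_integral_le_integral_norm h2π
      _ ≤ ∫ θ in (0:ℝ)..(2 * Real.pi),
            (r * (r - ‖z‖)⁻¹) * ‖D θ‖ := by
          refine intervalIntegral.integral_mono_on h2π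
            (((hAcont.sub hBcont).norm).intervalIntegrable _ _)
            ((continuous_const.mul hDabs).intervalIntegrable _ _)
            (fun θ _ => hbound θ)
      _ = (r * (r - ‖z‖)⁻¹) *
            ∫ θ in (0:ℝ)..(2 * Real.pi), ‖D θ‖ := by
          rw [intervalIntegral.integral_const_mul]
  have hS0 : 0 ≤ ∫ θ in (0:ℝ)..(2 * Real.pi), ‖D θ‖ :=
    intervalIntegral.integral_nonneg h2π (fun u _ => norm_nonneg _)
  have hfin := mul_le_mul_of_nonneg_left hkey hrρ.le
  have heq : (r - ‖z‖) * ((r * (r - ‖z‖)⁻¹) *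
      ∫ θ in (0:ℝ)..(2 * Real.pi), ‖D θ‖) =
      r * ∫ θ in (0:ℝ)..(2 * Real.pi), ‖D θ‖ := by
    field_simp
  rw [heq] at hfin
  exact hfin

/-- A sense-preserving `K`-quasiregular harmonic mapping `f = h + conj g` with bounded
length function `l_f(1) ≤ L` satisfies `Λ_f(z) ≤ L√K/(2π(1-|z|))`; consequently `f` is a
harmonic Bloch mapping with Bloch number at most `L√K/π`. -/
theorem length_implies_bloch (h g : ℂ → ℂ) (K L : ℝ) (hK : 1 ≤ K)
    (hh : DifferentiableOn ℂ h (ball (0 : ℂ) 1))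
    (hg : DifferentiableOn ℂ g (ball (0 : ℂ) 1))
    (hsp : ∀ z ∈ ball (0 : ℂ) 1, ‖deriv g z‖ < ‖deriv h z‖)
    (hqr : ∀ z ∈ ball (0 : ℂ) 1,
      ‖deriv h z‖ + ‖deriv g z‖ ≤
        K * (‖deriv h z‖ - ‖deriv g z‖))
    (hL : ∀ r : ℝ, 0 < r → r < 1 →
      r * ∫ θ in (0 : ℝ)..(2 * Real.pi),
          ‖deriv h ((r : ℂ) * Complex.exp (θ * Complex.I)) -
            Complex.exp (-2 * θ * Complex.I) *
              conj (deriv g ((r : ℂ) * Complex.exp (θ * Complex.I)))‖ ≤ L) :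
    ∀ z ∈ ball (0 : ℂ) 1,
      ‖deriv h z‖ + ‖deriv g z‖ ≤
          L * Real.sqrt K / (2 * Real.pi * (1 - ‖z‖)) ∧
        (1 - ‖z‖ ^ 2) *
            (‖deriv h z‖ + ‖deriv g z‖) ≤
          L * Real.sqrt K / Real.pi := by
  intro z hz
  have hH : DifferentiableOn ℂ (deriv h) (ball (0:ℂ) 1) :=
    ((hh.analyticOnNhd isOpen_ball).deriv).differentiableOn
  have hG : DifferentiableOn ℂ (deriv g) (ball (0:ℂ) 1) :=
    ((hg.analyticOnNhd isOpen_ball).deriv).differentiableOn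
  have hρ1 : ‖z‖ < 1 := by
    simpa using mem_ball_zero_iff.mp hz
  have hρ0 : 0 ≤ ‖z‖ := norm_nonneg z
  have hπ : 0 < Real.pi := Real.pi_pos
  set X := ‖deriv h z‖ with hXdef
  set Y := ‖deriv g z‖ with hYdef
  have hX0 : 0 ≤ X := norm_nonneg _
  have hY0 : 0 ≤ Y := norm_nonneg _
  have key1 : ∀ r : ℝ, ‖z‖ < r → r < 1 →
      (r - ‖z‖) * (2 * Real.pi * X) ≤ L := fun r h1 h2 =>
    le_trans (core (deriv h) (deriv g) z r hH hG h1 h2) (hL r (lt_of_le_of_lt hρ0 h1) h2)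
  have hlim : (1 - ‖z‖) * (2 * Real.pi * X) ≤ L := by
    have htend : Filter.Tendsto (fun r : ℝ => (r - ‖z‖) * (2 * Real.pi * X))
        (nhdsWithin 1 (Set.Iio 1)) (nhds ((1 - ‖z‖) * (2 * Real.pi * X))) :=
      (((continuous_id.sub continuous_const).mul continuous_const).tendsto 1).mono_left
        nhdsWithin_le_nhds
    refine le_of_tendsto htend ?_
    filter_upwards [Ioo_mem_nhdsLT_of_mem (Set.mem_Ioc.mpr ⟨hρ1, le_refl (1:ℝ)⟩)] with r hr
    exact key1 r hr.1 hr.2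
  have hXle : X ≤ L / (2 * Real.pi * (1 - ‖z‖)) := by
    rw [le_div_iff₀ (by nlinarith)]
    nlinarith [hlim]
  have hs1 : 1 ≤ Real.sqrt K := by
    rw [show (1:ℝ) = Real.sqrt 1 from Real.sqrt_one.symm]
    exact Real.sqrt_le_sqrt hK
  have hs2 : Real.sqrt K ^ 2 = K := Real.sq_sqrt (by linarith)
  have hΛ : X + Y ≤ Real.sqrt K * X := by
    have hq := hqr z hz
    rw [← hXdef, ← hYdef] at hq
    have h7 : (Real.sqrt K * X)^2 = K * X^2 := by rw [mul_pow, hs2]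
    have hsq : (X + Y)^2 ≤ (Real.sqrt K * X)^2 := by
      nlinarith [mul_le_mul_of_nonneg_left hq (add_nonneg hX0 hY0),
        mul_nonneg (le_trans zero_le_one hK) (sq_nonneg Y)]
    nlinarith [hsq, add_nonneg hX0 hY0, mul_nonneg (le_trans zero_le_one hs1) hX0]
  have hfirst : X + Y ≤ L * Real.sqrt K / (2 * Real.pi * (1 - ‖z‖)) := by
    calc X + Y ≤ Real.sqrt K * X := hΛ
      _ ≤ Real.sqrt K * (L / (2 * Real.pi * (1 - ‖z‖))) :=
          mul_le_mul_of_nonneg_left hXle (by linarith)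
      _ = L * Real.sqrt K / (2 * Real.pi * (1 - ‖z‖)) := by ring
  refine ⟨hfirst, ?_⟩
  have h1 : (X + Y) * (2 * Real.pi * (1 - ‖z‖)) ≤ L * Real.sqrt K :=
    (le_div_iff₀ (by nlinarith)).mp hfirst
  rw [le_div_iff₀ hπ]
  nlinarith [h1, mul_nonneg (mul_nonneg (add_nonneg hX0 hY0) hπ.le)
    (sq_nonneg (1 - ‖z‖))]
end

section
/- Let f be a sense-preserving K-quasiregular harmonic mapping on the unit disk. Then Λ_f(z)² ≤ K·S_f(1)/(1 − |z|)² for all z ∈ 𝔻, where S_f(1) = sup_{0<r<1} ∫_{𝔻_r} J_f dσ. -/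
open Metric MeasureTheory Real Set

theorem circle_mean (φ : ℂ → ℂ) (z : ℂ) (s : ℝ) (hs : 0 < s)
    (hφ : DifferentiableOn ℂ φ (closedBall z s)) :
    2 * π * ‖φ z‖ ^ 2 ≤
      ∫ θ in (0:ℝ)..(2*π), ‖φ (circleMap z s θ)‖ ^ 2 := by
  have hd : DifferentiableOn ℂ (fun w => φ w ^ 2) (closedBall z s) := hφ.pow 2
  have hz : z ∈ ball z s := mem_ball_self hs
  have key := hd.circleIntegral_sub_inv_smul hz
  rw [circleIntegral] at key
  have heq : ∀ θ : ℝ, deriv (circleMap z s) θ • ((circleMap z s θ - z)⁻¹ • φ (circleMap z s θ) ^ 2)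
      = Complex.I * φ (circleMap z s θ) ^ 2 := by
    intro θ
    rw [deriv_circleMap, circleMap_sub_center]
    have h0 : circleMap 0 s θ ≠ 0 := circleMap_ne_center hs.ne'
    field_simp
    ring_nf; rw [mul_inv_cancel_right₀ h0]
  simp only [heq] at key
  rw [intervalIntegral.integral_const_mul] at key
  have hI : (∫ θ in (0:ℝ)..(2*π), φ (circleMap z s θ) ^ 2) = (2 * π : ℝ) * φ z ^ 2 := by
    apply mul_left_cancel₀ Complex.I_ne_zero
    rw [key, smul_eq_mul]; push_cast; ring
  have habs : (2 * π) * ‖φ z‖ ^ 2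
      = ‖∫ θ in (0:ℝ)..(2*π), φ (circleMap z s θ) ^ 2‖ := by
    rw [hI, norm_mul, norm_pow]
    congr 1
    rw [Complex.norm_of_nonneg (by positivity)]
  rw [habs]
  have h1 := intervalIntegral.norm_integral_le_integral_norm (μ := volume) (a := (0:ℝ))
    (b := 2*π) (f := fun θ => φ (circleMap z s θ) ^ 2) (by positivity)
  simpa only [norm_pow] using h1

theorem polar_symm_eq (p : ℝ × ℝ) : Complex.polarCoord.symm p = circleMap 0 p.1 p.2 := by
  rw [Complex.polarCoord_symm_apply, circleMap, Complex.exp_mul_I]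
  push_cast
  ring

theorem area_submean (φ : ℂ → ℂ) (z : ℂ) (ρ : ℝ) (hρ : 0 < ρ)
    (hφ : DifferentiableOn ℂ φ (closedBall z ρ)) :
    π * ρ^2 * ‖φ z‖^2 ≤ ∫ w in ball z ρ, ‖φ w‖^2 := by
  set F : ℂ → ℝ := fun w => ‖φ w‖^2 with hF
  have hFc : ContinuousOn F (closedBall z ρ) := by
    exact ((hφ.continuousOn.norm).pow 2)
  -- step 1 : translation
  have step1 : (∫ w in ball z ρ, F w) = ∫ w, (ball (0:ℂ) ρ).indicator (fun w => F (z + w)) w := by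
    rw [← integral_indicator measurableSet_ball]
    rw [← integral_add_left_eq_self (μ := volume) (fun w => (ball z ρ).indicator F w) z]
    congr 1
    ext w
    by_cases hw : w ∈ ball (0:ℂ) ρ
    · rw [indicator_of_mem hw, indicator_of_mem (by simpa [mem_ball, dist_eq_norm] using hw)]
    · rw [indicator_of_notMem hw, indicator_of_notMem (by simpa [mem_ball, dist_eq_norm] using hw)]
  -- step 2 : polar coordinates
  have step2 : (∫ w, (ball (0:ℂ) ρ).indicator (fun w => F (z + w)) w)
      = ∫ p in Ioo (0:ℝ) ρ ×ˢ Ioo (-π) π, p.1 * F (z + circleMap 0 p.1 p.2) := by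
    rw [← Complex.integral_comp_polarCoord_symm]
    have hmS : MeasurableSet (Ioo (0:ℝ) ρ ×ˢ Ioo (-π) π) := by measurability
    have hsub : Ioo (0:ℝ) ρ ×ˢ Ioo (-π) π ⊆ polarCoord.target := by
      rw [polarCoord_target]
      exact Set.prod_mono (Ioo_subset_Ioi_self) (subset_rfl)
    calc ∫ p in polarCoord.target, p.1 • (ball (0:ℂ) ρ).indicator (fun w => F (z + w))
            (Complex.polarCoord.symm p)
        = ∫ p in polarCoord.target,
            (Ioo (0:ℝ) ρ ×ˢ Ioo (-π) π).indicator (fun p => p.1 * F (z + circleMap 0 p.1 p.2)) p := by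
          apply setIntegral_congr_fun polarCoord.open_target.measurableSet
          intro p hp
          rw [polarCoord_target] at hp
          have hp1 : 0 < p.1 := hp.1
          have hmem : Complex.polarCoord.symm p ∈ ball (0:ℂ) ρ ↔ p.1 < ρ := by
            rw [mem_ball_zero_iff, Complex.norm_polarCoord_symm,
              abs_of_pos hp1]
          show p.1 • (ball (0:ℂ) ρ).indicator (fun w => F (z + w)) (Complex.polarCoord.symm p)
            = (Ioo (0:ℝ) ρ ×ˢ Ioo (-π) π).indicator (fun p => p.1 * F (z + circleMap 0 p.1 p.2)) p
          by_cases hlt : p.1 < ρ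
          · rw [indicator_of_mem (hmem.mpr hlt), indicator_of_mem (by exact ⟨⟨hp1, hlt⟩, hp.2⟩),
              smul_eq_mul, polar_symm_eq]
          · rw [indicator_of_notMem (fun hc => hlt (hmem.mp hc)),
              indicator_of_notMem (fun hc => hlt hc.1.2), smul_zero]
      _ = ∫ p in polarCoord.target ∩ (Ioo (0:ℝ) ρ ×ˢ Ioo (-π) π),
            p.1 * F (z + circleMap 0 p.1 p.2) := setIntegral_indicator hmS
      _ = ∫ p in Ioo (0:ℝ) ρ ×ˢ Ioo (-π) π, p.1 * F (z + circleMap 0 p.1 p.2) := by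
          rw [inter_eq_right.mpr hsub]
  have hmap : Continuous (fun p : ℝ × ℝ => z + circleMap 0 p.1 p.2) := by
    simp only [circleMap, zero_add]
    fun_prop
  have hmaps : MapsTo (fun p : ℝ × ℝ => z + circleMap 0 p.1 p.2)
      (Icc (0:ℝ) ρ ×ˢ Icc (-π) π) (closedBall z ρ) := by
    intro p hp
    simp only [mem_closedBall, dist_eq_norm, add_sub_cancel_left,
      norm_circleMap_zero]
    rw [abs_of_nonneg hp.1.1]
    exact hp.1.2
  have hcont : ContinuousOn (fun p : ℝ × ℝ => p.1 * F (z + circleMap 0 p.1 p.2))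
      (Icc (0:ℝ) ρ ×ˢ Icc (-π) π) :=
    continuous_fst.continuousOn.mul (hFc.comp hmap.continuousOn hmaps)
  have hInt : IntegrableOn (fun p : ℝ × ℝ => p.1 * F (z + circleMap 0 p.1 p.2))
      (Ioo (0:ℝ) ρ ×ˢ Ioo (-π) π) :=
    (hcont.integrableOn_compact (isCompact_Icc.prod isCompact_Icc)).mono_set
      (Set.prod_mono Ioo_subset_Icc_self Ioo_subset_Icc_self)
  have hprodInt : Integrable (fun p : ℝ × ℝ => p.1 * F (z + circleMap 0 p.1 p.2))
      ((volume.restrict (Ioo (0:ℝ) ρ)).prod (volume.restrict (Ioo (-π) π))) := by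
    rw [Measure.prod_restrict]
    rw [← Measure.volume_eq_prod]
    exact hInt
  have step3 : (∫ p in Ioo (0:ℝ) ρ ×ˢ Ioo (-π) π, p.1 * F (z + circleMap 0 p.1 p.2))
      = ∫ s in Ioo (0:ℝ) ρ, ∫ θ in Ioo (-π) π, s * F (z + circleMap 0 s θ) := by
    rw [Measure.volume_eq_prod, ← Measure.prod_restrict]
    exact MeasureTheory.integral_prod _ hprodInt
  have hIntInner : IntegrableOn
      (fun s : ℝ => ∫ θ in Ioo (-π) π, s * F (z + circleMap 0 s θ)) (Ioo (0:ℝ) ρ) :=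
    hprodInt.integral_prod_left
  set C : ℝ := ‖φ z‖ ^ 2 with hC
  have hinner : ∀ s ∈ Ioo (0:ℝ) ρ,
      2 * π * C * s ≤ ∫ θ in Ioo (-π) π, s * F (z + circleMap 0 s θ) := by
    intro s hs
    have hφs : DifferentiableOn ℂ φ (closedBall z s) :=
      hφ.mono (closedBall_subset_closedBall hs.2.le)
    have hmean := circle_mean φ z s hs.1 hφs
    have hper : Function.Periodic (fun θ : ℝ => F (z + circleMap 0 s θ)) (2*π) :=
      (periodic_circleMap 0 s).comp fun w => F (z + w)
    have hshift := hper.intervalIntegral_add_eq (-π) 0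
    have hIoo : (∫ θ in Ioo (-π) π, F (z + circleMap 0 s θ))
        = ∫ θ in (0:ℝ)..(2*π), F (z + circleMap 0 s θ) := by
      rw [← integral_Ioc_eq_integral_Ioo,
        ← intervalIntegral.integral_of_le (by linarith [pi_pos] : (-π:ℝ) ≤ π)]
      have h' : (∫ x in (-π)..(π:ℝ), F (z + circleMap 0 s x))
          = ∫ x in (0:ℝ)..(2*π), F (z + circleMap 0 s x) := by
        rw [show -π + 2*π = (π:ℝ) from by ring] at hshift
        simpa using hshift
      rw [h']
    have hcm : ∀ θ : ℝ, z + circleMap 0 s θ = circleMap z s θ := by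
      intro θ; rw [← circleMap_sub_center z s θ]; ring
    calc 2 * π * C * s = s * (2 * π * C) := by ring
      _ ≤ s * ∫ θ in Ioo (-π) π, F (z + circleMap 0 s θ) := by
          apply mul_le_mul_of_nonneg_left _ hs.1.le
          rw [hIoo]
          simp only [hcm, hF]
          exact hmean
      _ = ∫ θ in Ioo (-π) π, s * F (z + circleMap 0 s θ) := (integral_const_mul s _).symm
  have houter : (∫ s in Ioo (0:ℝ) ρ, 2 * π * C * s)
      ≤ ∫ s in Ioo (0:ℝ) ρ, ∫ θ in Ioo (-π) π, s * F (z + circleMap 0 s θ) := by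
    apply setIntegral_mono_on _ hIntInner measurableSet_Ioo hinner
    apply Integrable.mono_measure _ (Measure.restrict_mono Ioo_subset_Icc_self le_rfl)
    exact (continuous_const.mul continuous_id).integrableOn_Icc
  have hval : (∫ s in Ioo (0:ℝ) ρ, 2 * π * C * s) = π * ρ^2 * C := by
    rw [integral_const_mul, ← integral_Ioc_eq_integral_Ioo,
      ← intervalIntegral.integral_of_le hρ.le]
    rw [integral_id]
    ring
  rw [step1, step2, step3, ← hval]
  exact houter


/-- For a sense-preserving `K`-quasiregular harmonic mapping `f = h + conj g` on the
unit disk, `Λ_f(z)² ≤ K S_f(1)/(1-|z|)²`, where `S_f(1)` bounds the harmonic area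
function (normalized area measure). -/
theorem lambda_sq_le_area (h g : ℂ → ℂ) (K S₁ : ℝ) (hK : 1 ≤ K)
    (hh : DifferentiableOn ℂ h (ball (0 : ℂ) 1))
    (hg : DifferentiableOn ℂ g (ball (0 : ℂ) 1))
    (hsp : ∀ z ∈ ball (0 : ℂ) 1, ‖deriv g z‖ < ‖deriv h z‖)
    (hqr : ∀ z ∈ ball (0 : ℂ) 1,
      ‖deriv h z‖ + ‖deriv g z‖ ≤
        K * (‖deriv h z‖ - ‖deriv g z‖))
    (hS : ∀ r : ℝ, 0 < r → r < 1 →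
      (Real.pi)⁻¹ *
          ∫ z in ball (0 : ℂ) r,
            (‖deriv h z‖ ^ 2 - ‖deriv g z‖ ^ 2) ≤ S₁) :
    ∀ z ∈ ball (0 : ℂ) 1,
      (‖deriv h z‖ + ‖deriv g z‖) ^ 2 ≤
        K * S₁ / (1 - ‖z‖) ^ 2 := by
  intro z hz
  have hz1 : ‖z‖ < 1 := by
    have := mem_ball.mp hz
    simpa [Complex.dist_eq] using this
  set d : ℝ := 1 - ‖z‖ with hd
  have hd0 : 0 < d := by simp only [hd]; linarith
  have hK0 : (0:ℝ) < K := by linarith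
  have hh' : DifferentiableOn ℂ (deriv h) (ball (0:ℂ) 1) :=
    ((hh.analyticOnNhd isOpen_ball).deriv).differentiableOn
  have hg' : DifferentiableOn ℂ (deriv g) (ball (0:ℂ) 1) :=
    ((hg.analyticOnNhd isOpen_ball).deriv).differentiableOn
  set A := ‖deriv h z‖ with hA
  set B := ‖deriv g z‖ with hB
  set J : ℂ → ℝ := fun w => ‖deriv h w‖ ^ 2 - ‖deriv g w‖ ^ 2 with hJ
  have hJc : ContinuousOn J (ball (0:ℂ) 1) :=
    (hh'.continuousOn.norm.pow 2).sub (hg'.continuousOn.norm.pow 2)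
  have key : ∀ ρ ∈ Ioo (0:ℝ) d, (A + B)^2 * ρ^2 ≤ K * S₁ := by
    intro ρ hρ
    obtain ⟨hρ0, hρd⟩ := hρ
    have hsubball : closedBall z ρ ⊆ ball (0:ℂ) 1 := by
      intro w hw
      have h1 : dist w z ≤ ρ := mem_closedBall.mp hw
      have h2 : dist w 0 ≤ dist w z + dist z 0 := dist_triangle _ _ _
      have h3 : dist z 0 = ‖z‖ := by simp [Complex.dist_eq]
      rw [mem_ball]
      have : d = 1 - ‖z‖ := hd
      linarith
    set r : ℝ := ‖z‖ + ρ with hr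
    have hr0 : 0 < r := by positivity
    have hr1 : r < 1 := by simp only [hr]; simp only [hd] at hρd; linarith
    have hsub2 : ball z ρ ⊆ ball (0:ℂ) r := by
      intro w hw
      have h1 : dist w z < ρ := mem_ball.mp hw
      have h2 : dist w 0 ≤ dist w z + dist z 0 := dist_triangle _ _ _
      have h3 : dist z 0 = ‖z‖ := by simp [Complex.dist_eq]
      rw [mem_ball]
      simp only [hr]
      linarith
    have hcbr : closedBall (0:ℂ) r ⊆ ball (0:ℂ) 1 := closedBall_subset_ball hr1
    -- integrabilities
    have hIa : IntegrableOn (fun w => ‖deriv h w‖ ^ 2) (ball z ρ) := by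
      apply IntegrableOn.mono_set _ ball_subset_closedBall
      exact ContinuousOn.integrableOn_compact (isCompact_closedBall _ _)
        ((hh'.continuousOn.mono hsubball).norm.pow 2)
    have hIJr : IntegrableOn J (ball (0:ℂ) r) := by
      apply IntegrableOn.mono_set _ ball_subset_closedBall
      exact ContinuousOn.integrableOn_compact (isCompact_closedBall _ _) (hJc.mono hcbr)
    have hIJ : IntegrableOn J (ball z ρ) :=
      hIJr.mono_set hsub2
    -- submean
    have hsm := area_submean (deriv h) z ρ hρ0 (hh'.mono hsubball)
    -- pointwise comparison
    have hpt : ∀ w ∈ ball z ρ, 4 * K * (‖deriv h w‖ ^ 2) ≤ (K+1)^2 * J w := by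
      intro w hw
      have hw1 : w ∈ ball (0:ℂ) 1 := hsubball (ball_subset_closedBall hw)
      have hq := hqr w hw1
      set A' := ‖deriv h w‖
      set B' := ‖deriv g w‖
      have hA'0 : 0 ≤ A' := norm_nonneg _
      have hB'0 : 0 ≤ B' := norm_nonneg _
      have h1 : (K+1) * B' ≤ (K-1) * A' := by nlinarith
      have h2 : ((K+1) * B')^2 ≤ ((K-1) * A')^2 := by
        apply pow_le_pow_left₀ (by positivity) h1
      simp only [hJ]
      nlinarith [h2]
    have hint1 : 4 * K * ∫ w in ball z ρ, ‖deriv h w‖ ^ 2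
        ≤ (K+1)^2 * ∫ w in ball z ρ, J w := by
      rw [← integral_const_mul, ← integral_const_mul]
      exact setIntegral_mono_on (hIa.const_mul _) (hIJ.const_mul _) measurableSet_ball hpt
    have hint2 : (∫ w in ball z ρ, J w) ≤ ∫ w in ball (0:ℂ) r, J w := by
      apply setIntegral_mono_set hIJr
      · apply (ae_restrict_iff' measurableSet_ball).mpr
        apply ae_of_all
        intro w hw
        have hw1 : w ∈ ball (0:ℂ) 1 := ball_subset_ball hr1.le hw
        have h1 := (hsp w hw1).le
        have h2 : ‖deriv g w‖ ^ 2 ≤ ‖deriv h w‖ ^ 2 :=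
          pow_le_pow_left₀ (norm_nonneg _) h1 2
        simp only [Pi.zero_apply, hJ]
        linarith
      · exact HasSubset.Subset.eventuallyLE hsub2
    have hS' : (∫ w in ball (0:ℂ) r, J w) ≤ π * S₁ := by
      have := hS r hr0 hr1
      have hπ : (0:ℝ) < π := pi_pos
      calc (∫ w in ball (0:ℂ) r, J w)
          = π * (π⁻¹ * ∫ w in ball (0:ℂ) r, J w) := by field_simp
        _ ≤ π * S₁ := by
            apply mul_le_mul_of_nonneg_left _ hπ.le
            exact this
    -- combine
    have hπ : (0:ℝ) < π := pi_pos
    have hA0 : 0 ≤ A := norm_nonneg _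
    have hB0 : 0 ≤ B := norm_nonneg _
    have e4 : (K+1) * (A + B) ≤ 2 * K * A := by
      have hq := hqr z hz
      rw [← hA, ← hB] at hq
      nlinarith
    have c1 : (K+1)^2 * (A+B)^2 ≤ 4*K^2*A^2 := by
      have h2 := pow_le_pow_left₀ (by positivity : (0:ℝ) ≤ (K+1)*(A+B)) e4 2
      nlinarith [h2]
    have c2 : (K+1)^2 * (A+B)^2 * (π * ρ^2) ≤ 4*K^2 * (π * ρ^2 * A^2) := by
      nlinarith [mul_le_mul_of_nonneg_right c1 (by positivity : (0:ℝ) ≤ π * ρ^2)]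
    have c3 : 4*K^2 * (π * ρ^2 * A^2) ≤ 4*K^2 * ∫ w in ball z ρ, ‖deriv h w‖ ^ 2 :=
      mul_le_mul_of_nonneg_left hsm (by positivity)
    have c4 : K * (4 * K * ∫ w in ball z ρ, ‖deriv h w‖ ^ 2)
        ≤ K * ((K+1)^2 * ∫ w in ball z ρ, J w) :=
      mul_le_mul_of_nonneg_left hint1 hK0.le
    have c5 : K * ((K+1)^2 * ∫ w in ball z ρ, J w) ≤ K * ((K+1)^2 * (π * S₁)) := by
      apply mul_le_mul_of_nonneg_left _ hK0.le
      apply mul_le_mul_of_nonneg_left _ (by positivity)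
      exact hint2.trans hS'
    have hfin : (K+1)^2 * ((A+B)^2 * (π * ρ^2)) ≤ (K+1)^2 * (K * (π * S₁)) := by
      linarith [c2, c3, c4, c5]
    have hfin2 : (A+B)^2 * (π * ρ^2) ≤ K * (π * S₁) :=
      le_of_mul_le_mul_left hfin (by positivity)
    have h9 : π * ((A+B)^2 * ρ^2) ≤ π * (K * S₁) := by linarith [hfin2]
    exact le_of_mul_le_mul_left h9 hπ
  -- limit ρ → d
  have hlim : (A + B)^2 * d^2 ≤ K * S₁ := by
    have hne : (nhdsWithin d (Ioo 0 d)).NeBot := by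
      apply mem_closure_iff_nhdsWithin_neBot.mp
      rw [closure_Ioo hd0.ne]
      exact ⟨hd0.le, le_rfl⟩
    have htend : Filter.Tendsto (fun ρ : ℝ => (A+B)^2 * ρ^2) (nhdsWithin d (Ioo 0 d))
        (nhds ((A+B)^2 * d^2)) :=
      ((continuous_const.mul (continuous_pow 2)).tendsto d).mono_left nhdsWithin_le_nhds
    apply le_of_tendsto htend
    filter_upwards [eventually_mem_nhdsWithin] with ρ hρ
    exact key ρ hρ
  have hd2 : (0:ℝ) < d^2 := by positivity
  exact (le_div_iff₀ hd2).mpr hlim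
end

section
/- For any complex numbers w and z, max over θ ∈ [0, 2π] of |w·cos θ + z·sin θ| equals (|w + iz| + |w − iz|)/2. -/
open Complex

lemma exp_neg_mul_I (θ : ℝ) : Complex.exp (-((θ:ℂ)*I)) = Complex.cos θ - Complex.sin θ * I := by
  rw [show -((θ:ℂ)*I) = ((-θ:ℂ))*I by ring, Complex.exp_mul_I, Complex.cos_neg, Complex.sin_neg]
  ring

lemma key (w z : ℂ) (θ : ℝ) :
    w * (Real.cos θ : ℂ) + z * (Real.sin θ : ℂ) =
      (w - I*z)/2 * Complex.exp (θ*I) + (w + I*z)/2 * Complex.exp (-((θ:ℂ)*I)) := by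
  rw [Complex.ofReal_cos, Complex.ofReal_sin, Complex.exp_mul_I, exp_neg_mul_I]
  linear_combination (z * Complex.sin θ) * Complex.I_mul_I

/-- For complex numbers `w, z`, the maximum over `θ ∈ [0, 2π]` of
`|w cos θ + z sin θ|` is `(|w + iz| + |w - iz|)/2`. -/
theorem max_cos_sin_combination (w z : ℂ) :
    IsGreatest
      ((fun θ : ℝ =>
        ‖w * (Real.cos θ : ℂ) + z * (Real.sin θ : ℂ)‖) ''
          Set.Icc 0 (2 * Real.pi))
      ((‖w + Complex.I * z‖ + ‖w - Complex.I * z‖) / 2) := by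
  have habs : ∀ θ : ℝ, ‖Complex.exp ((θ:ℂ)*I)‖ = 1 := fun θ => by
    simp [Complex.norm_exp]
  have habs' : ∀ θ : ℝ, ‖Complex.exp (-((θ:ℂ)*I))‖ = 1 := fun θ => by
    simp [Complex.norm_exp]
  set A := (w - I*z)/2 with hA
  set B := (w + I*z)/2 with hB
  have hAB : ‖A‖ + ‖B‖
      = (‖w + Complex.I * z‖ + ‖w - Complex.I * z‖) / 2 := by
    rw [hA, hB, norm_div, norm_div, Complex.norm_two]
    ring
  constructor
  · -- membership
    set φ := (Complex.arg B - Complex.arg A)/2 with hφ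
    set θ₀ := φ + Real.pi with hθ₀
    refine ⟨θ₀, ⟨?_, ?_⟩, ?_⟩
    · have h1 := Complex.neg_pi_lt_arg A
      have h2 := Complex.arg_le_pi B
      have h3 := Complex.neg_pi_lt_arg B
      have h4 := Complex.arg_le_pi A
      have := Real.pi_pos
      rw [hθ₀, hφ]; linarith
    · have h1 := Complex.neg_pi_lt_arg A
      have h2 := Complex.arg_le_pi B
      have h3 := Complex.neg_pi_lt_arg B
      have h4 := Complex.arg_le_pi A
      rw [hθ₀, hφ]; linarith
    · simp only
      rw [key w z θ₀, ← hA, ← hB]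
      have e1 : Complex.exp ((θ₀:ℂ)*I) = -Complex.exp ((φ:ℂ)*I) := by
        rw [hθ₀]
        push_cast
        rw [add_mul, Complex.exp_add, Complex.exp_pi_mul_I]
        ring
      have e2 : Complex.exp (-((θ₀:ℂ)*I)) = -Complex.exp (-((φ:ℂ)*I)) := by
        rw [hθ₀]
        push_cast
        have hpi : Complex.exp (-((Real.pi:ℂ)*I)) = -1 := by
          rw [Complex.exp_neg, Complex.exp_pi_mul_I]; norm_num
        rw [show -(((φ:ℂ)+(Real.pi:ℂ))*I) = -((φ:ℂ)*I) + -((Real.pi:ℂ)*I) by ring,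
          Complex.exp_add, hpi]
        ring
      rw [e1, e2]
      set ψ := (Complex.arg A + Complex.arg B)/2 with hψ
      have eA : A * Complex.exp ((φ:ℂ)*I) = (‖A‖ : ℂ) * Complex.exp ((ψ:ℂ)*I) := by
        conv_lhs => rw [← Complex.norm_mul_exp_arg_mul_I A]
        rw [mul_assoc, ← Complex.exp_add]
        congr 2
        push_cast [hφ, hψ]
        ring
      have eB : B * Complex.exp (-((φ:ℂ)*I)) = (‖B‖ : ℂ) * Complex.exp ((ψ:ℂ)*I) := by
        conv_lhs => rw [← Complex.norm_mul_exp_arg_mul_I B]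
        rw [mul_assoc, ← Complex.exp_add]
        congr 2
        push_cast [hφ, hψ]
        ring
      rw [show A * -Complex.exp ((φ:ℂ)*I) + B * -Complex.exp (-((φ:ℂ)*I))
          = -(A * Complex.exp ((φ:ℂ)*I) + B * Complex.exp (-((φ:ℂ)*I))) by ring,
        eA, eB, ← add_mul, norm_neg, norm_mul, habs ψ, mul_one, ← hAB]
      rw [← Complex.ofReal_add, Complex.norm_real, Real.norm_eq_abs,
        _root_.abs_of_nonneg (by positivity)]
  · rintro x ⟨θ, hθ, rfl⟩
    simp only
    rw [key w z θ, ← hA, ← hB, ← hAB]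
    calc ‖A * Complex.exp ((θ:ℂ)*I) + B * Complex.exp (-((θ:ℂ)*I))‖
        ≤ ‖A * Complex.exp ((θ:ℂ)*I)‖ + ‖B * Complex.exp (-((θ:ℂ)*I))‖ :=
          norm_add_le _ _
      _ = ‖A‖ + ‖B‖ := by rw [norm_mul, norm_mul, habs θ, habs' θ, mul_one, mul_one]
end

section
/- Let f be harmonic on the unit disk and ω a majorant. If there exists C₁ > 0 with Λ_f(z) ≤ C₁·ω(1/d(z)) for all z ∈ 𝔻, where d(z) = 1 − |z|, then there exists C₂ > 0 such that |f(z) − f(w)| / |z − w| ≤ C₂·ω(1/√(d(z)d(w))) for all distinct z, w ∈ 𝔻. -/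
open Metric Set ComplexConjugate

lemma two_log_le (u : ℝ) (hu : 1 ≤ u) : 2 * Real.log u ≤ u - 1/u := by
  have hu0 : 0 < u := by linarith
  have h1 : Real.log u ≤ Real.sinh (Real.log u) :=
    Real.self_le_sinh_iff.2 (Real.log_nonneg hu)
  have h2 : Real.sinh (Real.log u) = (u - 1/u) / 2 := by
    rw [Real.sinh_eq, Real.exp_log hu0, Real.exp_neg, Real.exp_log hu0, one_div]
  linarith

lemma log_sub_le (p q : ℝ) (hp : 0 < p) (hpq : p ≤ q) :
    Real.log q - Real.log p ≤ (q - p) / Real.sqrt (p * q) := by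
  have hq : 0 < q := lt_of_lt_of_le hp hpq
  set u := Real.sqrt (q / p) with hu_def
  have hqp : 1 ≤ q / p := (one_le_div hp).2 hpq
  have hu1 : 1 ≤ u := by
    rw [hu_def, show (1:ℝ) = Real.sqrt 1 by simp]
    exact Real.sqrt_le_sqrt hqp
  have hu0 : 0 < u := lt_of_lt_of_le one_pos hu1
  have hlog : 2 * Real.log u = Real.log q - Real.log p := by
    rw [hu_def, Real.log_sqrt (by positivity), Real.log_div hq.ne' hp.ne']
    ring
  have key := two_log_le u hu1
  rw [hlog] at key
  have hsp : 0 < Real.sqrt p := Real.sqrt_pos.2 hp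
  have hsq : 0 < Real.sqrt q := Real.sqrt_pos.2 hq
  have he : u - 1/u = (q - p) / Real.sqrt (p * q) := by
    rw [hu_def, Real.sqrt_div hq.le p, Real.sqrt_mul hp.le q, one_div_div,
      div_sub_div _ _ hsp.ne' hsq.ne', Real.mul_self_sqrt hq.le, Real.mul_self_sqrt hp.le]
  linarith [he ▸ key]

lemma ratio_le (p q : ℝ) (hp : 0 < p) (hq : 0 < q) (hne : p ≠ q) :
    (Real.log q - Real.log p) / (q - p) ≤ (Real.sqrt (p * q))⁻¹ := by
  rcases lt_or_gt_of_ne hne with hlt | hlt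
  · rw [div_le_iff₀ (sub_pos.2 hlt), inv_mul_eq_div]
    exact log_sub_le p q hp hlt.le
  · have key := log_sub_le q p hq hlt.le
    rw [mul_comm q p] at key
    have e : (Real.log q - Real.log p)/(q-p) = (Real.log p - Real.log q)/(p-q) := by
      rw [← neg_div_neg_eq]; ring_nf
    rw [e, div_le_iff₀ (sub_pos.2 hlt), inv_mul_eq_div]
    exact key

lemma key_integral (p q : ℝ) (hp : 0 < p) (hq : 0 < q) :
    ∫ t in (0:ℝ)..1, ((1-t)*p + t*q)⁻¹ ≤ (Real.sqrt (p * q))⁻¹ := by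
  have hpos : ∀ t ∈ Icc (0:ℝ) 1, 0 < (1-t)*p + t*q := by
    intro t ht
    rcases eq_or_lt_of_le ht.1 with h0 | h0
    · rw [← h0]; simpa using hp
    · have h1 : 0 ≤ (1-t)*p := mul_nonneg (by linarith [ht.2]) hp.le
      nlinarith [mul_pos h0 hq]
  have hcont : ContinuousOn (fun t : ℝ => ((1-t)*p + t*q)⁻¹) (uIcc (0:ℝ) 1) := by
    rw [uIcc_of_le zero_le_one]
    exact (ContinuousOn.inv₀ (by fun_prop) (fun t ht => (hpos t ht).ne'))
  have hint : IntervalIntegrable (fun t : ℝ => ((1-t)*p + t*q)⁻¹) MeasureTheory.volume 0 1 :=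
    hcont.intervalIntegrable
  rcases eq_or_ne p q with rfl | hne
  · have e : ∀ t : ℝ, ((1-t)*p + t*p)⁻¹ = p⁻¹ := fun t => by
      rw [show (1-t)*p + t*p = p by ring]
    simp_rw [e]
    rw [intervalIntegral.integral_const]
    simp [Real.sqrt_mul_self hp.le]
  · have hderiv : ∀ t ∈ uIcc (0:ℝ) 1,
        HasDerivAt (fun t : ℝ => Real.log ((1-t)*p + t*q) / (q - p)) (((1-t)*p + t*q)⁻¹) t := by
      intro t ht
      rw [uIcc_of_le zero_le_one] at ht
      have hl : HasDerivAt (fun t : ℝ => (1-t)*p + t*q) (q - p) t := by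
        have h1 : HasDerivAt (fun t : ℝ => (1-t)*p) (-1 * p) t :=
          (((hasDerivAt_id t).const_sub 1).mul_const p)
        have h2 : HasDerivAt (fun t : ℝ => t * q) (1 * q) t := (hasDerivAt_id t).mul_const q
        exact (h1.add h2).congr_deriv (by ring)
      have hlog := (hl.log (hpos t ht).ne').div_const (q - p)
      have hqp : q - p ≠ 0 := sub_ne_zero.2 (Ne.symm hne)
      refine hlog.congr_deriv ?_
      rw [div_div, mul_comm ((1-t)*p+t*q) (q-p), ← div_div, div_self hqp, one_div]
    have heq := intervalIntegral.integral_eq_sub_of_hasDerivAt hderiv hint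
    rw [heq]
    have e1 : (1 - (1:ℝ)) * p + 1 * q = q := by ring
    have e2 : (1 - (0:ℝ)) * p + 0 * q = p := by ring
    simp only [e1, e2, div_sub_div_same]
    exact ratio_le p q hp hq hne

lemma contOn_deriv (F : ℂ → ℂ) (hF : DifferentiableOn ℂ F (ball (0:ℂ) 1)) :
    ContinuousOn (deriv F) (ball (0:ℂ) 1) :=
  ((hF.analyticOnNhd isOpen_ball).deriv).continuousOn

lemma ftc_seg (F : ℂ → ℂ) (hF : DifferentiableOn ℂ F (ball (0:ℂ) 1))
    (z w : ℂ) (hz : z ∈ ball (0:ℂ) 1) (hw : w ∈ ball (0:ℂ) 1) :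
    F z - F w = ∫ t in (0:ℝ)..1, deriv F (w + (t:ℝ) • (z - w)) * (z - w) := by
  have hmem : ∀ t ∈ Icc (0:ℝ) 1, w + (t:ℝ) • (z - w) ∈ ball (0:ℂ) 1 := fun t ht =>
    (convex_ball (0:ℂ) 1).add_smul_sub_mem hw hz ht
  have hγd : ∀ t : ℝ, HasDerivAt (fun t : ℝ => w + (t:ℝ) • (z - w)) (z - w) t := fun t => by
    simpa using ((hasDerivAt_id t).smul_const (z - w)).const_add w
  have hder : ∀ t ∈ uIcc (0:ℝ) 1,
      HasDerivAt (fun t : ℝ => F (w + (t:ℝ) • (z - w)))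
        (deriv F (w + (t:ℝ) • (z - w)) * (z - w)) t := by
    intro t ht
    rw [uIcc_of_le zero_le_one] at ht
    have hda : DifferentiableAt ℂ F (w + (t:ℝ) • (z - w)) :=
      hF.differentiableAt (isOpen_ball.mem_nhds (hmem t ht))
    have := (hda.hasDerivAt).comp t (hγd t)
    exact this
  have hcont : ContinuousOn (fun t : ℝ => deriv F (w + (t:ℝ) • (z - w)) * (z - w))
      (uIcc (0:ℝ) 1) := by
    rw [uIcc_of_le zero_le_one]
    exact (((contOn_deriv F hF).comp
      ((by fun_prop : Continuous fun t : ℝ => w + (t:ℝ) • (z - w)).continuousOn) hmem).mul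
      continuousOn_const)
  have heq := intervalIntegral.integral_eq_sub_of_hasDerivAt hder hcont.intervalIntegrable
  rw [heq]
  norm_num

/-- If a harmonic mapping `f = h + conj g` of the unit disk satisfies
`Λ_f(z) ≤ C₁ ω(1/d(z))`, `d(z) = 1 - |z|`, for a majorant `ω`, then
`|f(z) - f(w)|/|z - w| ≤ C₂ ω(1/√(d(z)d(w)))` for some `C₂ > 0`. -/
theorem lambda_bound_implies_lipschitz (h g : ℂ → ℂ) (ω : ℝ → ℝ)
    (hcont : ContinuousOn ω (Ici 0))
    (hmono : MonotoneOn ω (Ici 0))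
    (h0 : ω 0 = 0)
    (hdec : ∀ s t : ℝ, 0 < s → s ≤ t → ω t / t ≤ ω s / s)
    (hh : DifferentiableOn ℂ h (ball (0 : ℂ) 1))
    (hg : DifferentiableOn ℂ g (ball (0 : ℂ) 1))
    (C₁ : ℝ) (hC₁ : 0 < C₁)
    (hΛ : ∀ z ∈ ball (0 : ℂ) 1,
      ‖deriv h z‖ + ‖deriv g z‖ ≤
        C₁ * ω (1 / (1 - ‖z‖))) :
    ∃ C₂ > 0, ∀ z ∈ ball (0 : ℂ) 1, ∀ w ∈ ball (0 : ℂ) 1, z ≠ w →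
      ‖(h z + conj (g z)) - (h w + conj (g w))‖ / ‖z - w‖ ≤
        C₂ * ω (1 / Real.sqrt ((1 - ‖z‖) * (1 - ‖w‖))) := by
  refine ⟨2 * C₁, by positivity, ?_⟩
  intro z hz w hw hzw
  have haz : ‖z‖ < 1 := by exact mem_ball_zero_iff.1 hz
  have hbw : ‖w‖ < 1 := by exact mem_ball_zero_iff.1 hw
  set a : ℝ := 1 - ‖z‖ with ha_def
  set b : ℝ := 1 - ‖w‖ with hb_def
  have ha : 0 < a := sub_pos.2 haz
  have hb : 0 < b := sub_pos.2 hbw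
  have hab : 0 < a * b := mul_pos ha hb
  have hsq : 0 < Real.sqrt (a*b) := Real.sqrt_pos.2 hab
  set s : ℝ := (Real.sqrt (a*b))⁻¹ with hs_def
  have hs : 0 < s := inv_pos.2 hsq
  have hωnn : ∀ x : ℝ, 0 ≤ x → 0 ≤ ω x := by
    intro x hx
    have := hmono (mem_Ici.2 le_rfl) (mem_Ici.2 hx) hx
    rwa [h0] at this
  have hωs : 0 ≤ ω s := hωnn s hs.le
  have hLpos : ∀ t ∈ Icc (0:ℝ) 1, 0 < (1-t)*b + t*a := by
    intro t ht
    rcases eq_or_lt_of_le ht.1 with h1 | h1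
    · rw [← h1]; simpa using hb
    · have h2 : 0 ≤ (1-t)*b := mul_nonneg (by linarith [ht.2]) hb.le
      nlinarith [mul_pos h1 ha]
  have hmem : ∀ t ∈ Icc (0:ℝ) 1, w + (t:ℝ) • (z - w) ∈ ball (0:ℂ) 1 := fun t ht =>
    (convex_ball (0:ℂ) 1).add_smul_sub_mem hw hz ht
  have hdL : ∀ t ∈ Icc (0:ℝ) 1,
      (1-t)*b + t*a ≤ 1 - ‖w + (t:ℝ) • (z - w)‖ := by
    intro t ht
    have e : w + (t:ℝ) • (z - w) = ((1-t) : ℝ) • w + (t:ℝ) • z := by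
      rw [smul_sub, sub_smul, one_smul]; abel
    have habs : ‖w + (t:ℝ) • (z - w)‖ ≤ (1-t) * ‖w‖ + t * ‖z‖ := by
      rw [e]
      refine (norm_add_le _ _).trans ?_
      rw [norm_smul, norm_smul, Real.norm_of_nonneg (by linarith [ht.2]),
        Real.norm_of_nonneg ht.1]
    rw [ha_def, hb_def]
    nlinarith [habs]
  -- pointwise bound on the integrand
  have hpt : ∀ t ∈ Icc (0:ℝ) 1,
      ‖deriv h (w + (t:ℝ) • (z - w))‖ + ‖deriv g (w + (t:ℝ) • (z - w))‖ ≤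
        C₁ * ω s + C₁ * ω s * Real.sqrt (a*b) * ((1-t)*b + t*a)⁻¹ := by
    intro t ht
    have hL := hLpos t ht
    have hLinv : 0 < ((1-t)*b + t*a)⁻¹ := inv_pos.2 hL
    have h1 := hΛ _ (hmem t ht)
    have hd1 : 0 < 1 - ‖w + (t:ℝ) • (z - w)‖ := lt_of_lt_of_le hL (hdL t ht)
    have h2 : ω (1 / (1 - ‖w + (t:ℝ) • (z - w)‖)) ≤ ω (((1-t)*b + t*a)⁻¹) := by
      refine hmono (mem_Ici.2 (by positivity)) (mem_Ici.2 hLinv.le) ?_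
      rw [one_div]
      exact inv_anti₀ hL (hdL t ht)
    have hC1 : ‖deriv h (w + (t:ℝ) • (z - w))‖ +
        ‖deriv g (w + (t:ℝ) • (z - w))‖ ≤ C₁ * ω (((1-t)*b+t*a)⁻¹) :=
      h1.trans (mul_le_mul_of_nonneg_left h2 hC₁.le)
    rcases le_or_gt (((1-t)*b + t*a)⁻¹) s with hc | hc
    · have h3 : ω (((1-t)*b+t*a)⁻¹) ≤ ω s := hmono (mem_Ici.2 hLinv.le) (mem_Ici.2 hs.le) hc
      have h4 : 0 ≤ C₁ * ω s * Real.sqrt (a*b) * ((1-t)*b+t*a)⁻¹ :=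
        mul_nonneg (mul_nonneg (mul_nonneg hC₁.le hωs) hsq.le) hLinv.le
      nlinarith [mul_le_mul_of_nonneg_left h3 hC₁.le]
    · have h3 := hdec s (((1-t)*b+t*a)⁻¹) hs hc.le
      have h4 : ω (((1-t)*b+t*a)⁻¹) ≤ ω s * Real.sqrt (a*b) * ((1-t)*b+t*a)⁻¹ := by
        calc ω (((1-t)*b+t*a)⁻¹)
            = ω (((1-t)*b+t*a)⁻¹) / ((1-t)*b+t*a)⁻¹ * ((1-t)*b+t*a)⁻¹ := by
              field_simp
          _ ≤ ω s / s * ((1-t)*b+t*a)⁻¹ := mul_le_mul_of_nonneg_right h3 hLinv.le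
          _ = ω s * Real.sqrt (a*b) * ((1-t)*b+t*a)⁻¹ := by
              rw [div_eq_mul_inv, hs_def, inv_inv]
      have h5 : 0 ≤ C₁ * ω s := mul_nonneg hC₁.le hωs
      nlinarith [mul_le_mul_of_nonneg_left h4 hC₁.le]
  -- continuity / integrability
  have hγc : Continuous fun t : ℝ => w + (t:ℝ) • (z - w) := by fun_prop
  have hch : ContinuousOn (fun t : ℝ => ‖deriv h (w + (t:ℝ) • (z - w))‖)
      (Icc (0:ℝ) 1) :=
    continuous_norm.comp_continuousOn ((contOn_deriv h hh).comp hγc.continuousOn hmem)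
  have hcg : ContinuousOn (fun t : ℝ => ‖deriv g (w + (t:ℝ) • (z - w))‖)
      (Icc (0:ℝ) 1) :=
    continuous_norm.comp_continuousOn ((contOn_deriv g hg).comp hγc.continuousOn hmem)
  have hcL : ContinuousOn (fun t : ℝ => ((1-t)*b + t*a)⁻¹) (Icc (0:ℝ) 1) :=
    ContinuousOn.inv₀ (by fun_prop) (fun t ht => (hLpos t ht).ne')
  have hih : IntervalIntegrable (fun t : ℝ => ‖deriv h (w + (t:ℝ) • (z - w))‖)
      MeasureTheory.volume 0 1 := by
    apply ContinuousOn.intervalIntegrable; rw [uIcc_of_le zero_le_one]; exact hch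
  have hig : IntervalIntegrable (fun t : ℝ => ‖deriv g (w + (t:ℝ) • (z - w))‖)
      MeasureTheory.volume 0 1 := by
    apply ContinuousOn.intervalIntegrable; rw [uIcc_of_le zero_le_one]; exact hcg
  have hiSum : IntervalIntegrable (fun t : ℝ =>
      ‖deriv h (w + (t:ℝ) • (z - w))‖ +
      ‖deriv g (w + (t:ℝ) • (z - w))‖) MeasureTheory.volume 0 1 := hih.add hig
  have hiL : IntervalIntegrable (fun t : ℝ => ((1-t)*b + t*a)⁻¹) MeasureTheory.volume 0 1 := by
    apply ContinuousOn.intervalIntegrable; rw [uIcc_of_le zero_le_one]; exact hcL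
  have hiP : IntervalIntegrable (fun t : ℝ =>
      C₁ * ω s + C₁ * ω s * Real.sqrt (a*b) * ((1-t)*b + t*a)⁻¹)
      MeasureTheory.volume 0 1 := intervalIntegrable_const.add (hiL.const_mul _)
  -- main integral estimate
  have hIest : (∫ t in (0:ℝ)..1, (‖deriv h (w + (t:ℝ) • (z - w))‖ +
      ‖deriv g (w + (t:ℝ) • (z - w))‖)) ≤ 2 * C₁ * ω s := by
    have hm := intervalIntegral.integral_mono_on zero_le_one hiSum hiP hpt
    have hval : (∫ t in (0:ℝ)..1, (C₁ * ω s + C₁ * ω s * Real.sqrt (a*b) * ((1-t)*b + t*a)⁻¹)) =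
        C₁ * ω s + C₁ * ω s * Real.sqrt (a*b) * ∫ t in (0:ℝ)..1, ((1-t)*b + t*a)⁻¹ := by
      rw [intervalIntegral.integral_add intervalIntegrable_const (hiL.const_mul _),
        intervalIntegral.integral_const, intervalIntegral.integral_const_mul]
      norm_num
    rw [hval] at hm
    have hkey := key_integral b a hb ha
    rw [mul_comm b a] at hkey
    have h6 : C₁ * ω s * Real.sqrt (a*b) * (∫ t in (0:ℝ)..1, ((1-t)*b + t*a)⁻¹) ≤ C₁ * ω s := by
      calc C₁ * ω s * Real.sqrt (a*b) * (∫ t in (0:ℝ)..1, ((1-t)*b + t*a)⁻¹)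
          ≤ C₁ * ω s * Real.sqrt (a*b) * (Real.sqrt (a*b))⁻¹ :=
            mul_le_mul_of_nonneg_left hkey (mul_nonneg (mul_nonneg hC₁.le hωs) hsq.le)
        _ = C₁ * ω s := by rw [mul_assoc, mul_inv_cancel₀ hsq.ne', mul_one]
    linarith
  -- FTC bounds
  have hI1 : ‖h z - h w‖ ≤
      (∫ t in (0:ℝ)..1, ‖deriv h (w + (t:ℝ) • (z - w))‖) * ‖z - w‖ := by
    rw [ftc_seg h hh z w hz hw]
    refine (intervalIntegral.norm_integral_le_integral_norm zero_le_one).trans_eq ?_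
    rw [← intervalIntegral.integral_mul_const]
    simp only [norm_mul]
  have hI2 : ‖g z - g w‖ ≤
      (∫ t in (0:ℝ)..1, ‖deriv g (w + (t:ℝ) • (z - w))‖) * ‖z - w‖ := by
    rw [ftc_seg g hg z w hz hw]
    refine (intervalIntegral.norm_integral_le_integral_norm zero_le_one).trans_eq ?_
    rw [← intervalIntegral.integral_mul_const]
    simp only [norm_mul]
  have hsplit : ‖(h z + conj (g z)) - (h w + conj (g w))‖ ≤
      ‖h z - h w‖ + ‖g z - g w‖ := by
    have e : (h z + conj (g z)) - (h w + conj (g w)) = (h z - h w) + conj (g z - g w) := by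
      rw [map_sub]; ring
    rw [e]
    refine (norm_add_le _ _).trans_eq ?_
    rw [Complex.norm_conj]
  have hsum : ‖h z - h w‖ + ‖g z - g w‖ ≤
      (∫ t in (0:ℝ)..1, (‖deriv h (w + (t:ℝ) • (z - w))‖ +
        ‖deriv g (w + (t:ℝ) • (z - w))‖)) * ‖z - w‖ := by
    have hadd := add_le_add hI1 hI2
    rwa [← add_mul, ← intervalIntegral.integral_add hih hig] at hadd
  have htot : ‖(h z + conj (g z)) - (h w + conj (g w))‖ ≤
      2 * C₁ * ω s * ‖z - w‖ :=
    (hsplit.trans hsum).trans (mul_le_mul_of_nonneg_right hIest (norm_nonneg _))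
  have hzw' : 0 < ‖z - w‖ := norm_pos_iff.2 (sub_ne_zero.2 hzw)
  rw [div_le_iff₀ hzw', one_div]
  exact htot
end

section
/- Let f be harmonic on Ω ⊂ ℂ, z ∈ Ω, r = d_Ω(z)/2, and suppose |f(ζ) − f(z)| ≤ C·ω(|ζ − z|) for all ζ ∈ Ω. Then Λ_f(z) ≤ (21C/π)·ω(d_Ω(z))/d_Ω(z), where ω is a majorant. (This is the sufficiency direction of the Hardy–Littlewood-type theorem, via Poisson kernel derivative estimates: for w ∈ 𝔻(z, r/2), |∂_w P(w, re^{iθ})| ≤ 21/(2r) and |∂_{w̄} P(w, re^{iθ})| ≤ 21/(2r), where P(w, re^{iθ}) = (r² − |w−z|²)/|w − z − re^{iθ}|².) -/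
open Metric Set ComplexConjugate

private lemma my_intervalIntegral_conj {f : ℝ → ℂ} {a b : ℝ} :
    (∫ t in a..b, conj (f t)) = conj (∫ t in a..b, f t) := by
  simp only [intervalIntegral]
  rw [integral_conj, integral_conj, ← map_sub]

/-- If `∮ g = 0` on the circle, then the circle integral of `(ζ-z)^{-2} • conj (g ζ)` is zero. -/
private lemma circleIntegral_zpow_conj_zero {g : ℂ → ℂ} {z : ℂ} {R : ℝ} (hR : 0 < R)
    (hg0 : (∮ ζ in C(z, R), g ζ) = 0) :
    (∮ ζ in C(z, R), (ζ - z) ^ (-2 : ℤ) • conj (g ζ)) = 0 := by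
  have h1 : (∫ θ in (0 : ℝ)..2 * Real.pi,
      (circleMap 0 R θ * Complex.I) * g (circleMap z R θ)) = 0 := by
    simpa [circleIntegral, deriv_circleMap, smul_eq_mul] using hg0
  have h2 : (∫ θ in (0 : ℝ)..2 * Real.pi,
      conj ((circleMap 0 R θ * Complex.I) * g (circleMap z R θ))) = 0 := by
    rw [my_intervalIntegral_conj, h1, map_zero]
  have h3 : (∫ θ in (0 : ℝ)..2 * Real.pi,
      (-(R : ℂ) ^ 2)⁻¹ * conj ((circleMap 0 R θ * Complex.I) * g (circleMap z R θ))) = 0 := by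
    rw [intervalIntegral.integral_const_mul, h2, mul_zero]
  rw [circleIntegral]
  rw [← h3]
  refine intervalIntegral.integral_congr fun θ _ => ?_
  have hc : circleMap 0 R θ ≠ 0 := circleMap_ne_center hR.ne'
  have hcc : circleMap 0 R θ * conj (circleMap 0 R θ) = (R : ℂ) ^ 2 := by
    rw [Complex.mul_conj]
    norm_cast
    simp [Complex.normSq_apply, circleMap, Complex.exp_ofReal_mul_I_re,
      Complex.exp_ofReal_mul_I_im]
    nlinarith [Real.sin_sq_add_cos_sq θ]
  have hR2 : ((R : ℂ) ^ 2) ≠ 0 := by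
    exact pow_ne_zero 2 (by exact_mod_cast hR.ne')
  rw [deriv_circleMap, circleMap_sub_center]
  have hconjc : conj (circleMap 0 R θ) = (R : ℂ) ^ 2 / circleMap 0 R θ := by
    rw [eq_div_iff hc, mul_comm]
    exact hcc
  simp only [smul_eq_mul, map_mul, Complex.conj_I, hconjc, zpow_neg, zpow_two]
  field_simp
  rw [mul_div_cancel_right₀ _ (by exact_mod_cast hR.ne' : (R : ℂ) ≠ 0)]

private lemma add_circleIntegral {f g : ℂ → ℂ} {c : ℂ} {R : ℝ}
    (hf : CircleIntegrable f c R) (hg : CircleIntegrable g c R) :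
    (∮ ζ in C(c, R), (f ζ + g ζ)) = (∮ ζ in C(c, R), f ζ) + ∮ ζ in C(c, R), g ζ := by
  simp only [circleIntegral, smul_add, intervalIntegral.integral_add hf.out hg.out]

/-- Key derivative estimate: if `h, g` are holomorphic on a neighborhood of the closed ball
and `|h + conj g - (h z + conj g z)| ≤ M` on the sphere, then `|h'(z)| ≤ M / R`. -/
private lemma deriv_bound {z : ℂ} {R M : ℝ} (hR : 0 < R) {h g : ℂ → ℂ}
    (hh : DifferentiableOn ℂ h (closedBall z R))
    (hg : DifferentiableOn ℂ g (closedBall z R))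
    (hM : ∀ ζ ∈ sphere z R, ‖h ζ + conj (g ζ) - (h z + conj (g z))‖ ≤ M) :
    ‖deriv h z‖ ≤ M / R := by
  set K : ℂ := h z + conj (g z) with hK
  have hhc : ContinuousOn h (closedBall z R) := hh.continuousOn
  have hgc : ContinuousOn g (closedBall z R) := hg.continuousOn
  have hsub : sphere z R ⊆ closedBall z R := sphere_subset_closedBall
  have hinv : ContinuousOn (fun ζ => (ζ - z) ^ (-2 : ℤ)) (sphere z R) := by
    intro ζ hζ
    have hne : ζ - z ≠ 0 := by
      have : ‖ζ - z‖ = R := by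
        simpa using mem_sphere_iff_norm.mp hζ
      intro hc; rw [hc] at this; simp at this
      exact hR.ne this
    exact ((continuousAt_id.sub continuousAt_const).zpow₀ _ (Or.inl hne)).continuousWithinAt
  have i1 : CircleIntegrable (fun ζ => (ζ - z) ^ (-2 : ℤ) • h ζ) z R :=
    ContinuousOn.circleIntegrable hR.le (hinv.smul (hhc.mono hsub))
  have i2 : CircleIntegrable (fun ζ => (ζ - z) ^ (-2 : ℤ) • conj (g ζ)) z R :=
    ContinuousOn.circleIntegrable hR.le
      (hinv.smul (Complex.continuous_conj.comp_continuousOn (hgc.mono hsub)))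
  have i3 : CircleIntegrable (fun ζ => (ζ - z) ^ (-2 : ℤ) • K) z R :=
    ContinuousOn.circleIntegrable hR.le (hinv.smul continuousOn_const)
  -- Cauchy–Goursat: ∮ g = 0
  have hg0 : (∮ ζ in C(z, R), g ζ) = 0 :=
    Complex.circleIntegral_eq_zero_of_differentiable_on_off_countable hR.le
      countable_empty hgc
      (fun w hw => (hg.mono ball_subset_closedBall).differentiableAt
        (isOpen_ball.mem_nhds hw.1))
  have hconj0 : (∮ ζ in C(z, R), (ζ - z) ^ (-2 : ℤ) • conj (g ζ)) = 0 :=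
    circleIntegral_zpow_conj_zero hR hg0
  have hconst0 : (∮ ζ in C(z, R), (ζ - z) ^ (-2 : ℤ) • K) = 0 := by
    rw [circleIntegral.integral_smul_const, circleIntegral.integral_sub_zpow_of_ne (by decide) z z R,
      zero_smul]
  -- derivative formula
  have hdiff : DiffContOnCl ℂ h (ball z R) :=
    ⟨hh.mono ball_subset_closedBall, by
      rw [closure_ball z hR.ne']; exact hhc⟩
  have hderiv : deriv h z =
      (2 * Real.pi * Complex.I : ℂ)⁻¹ • ∮ ζ in C(z, R), (ζ - z) ^ (-2 : ℤ) • h ζ :=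
    by
      have e := hdiff.deriv_eq_smul_circleIntegral hR
      have e2 : (∮ ζ in C(z, R), (ζ - z) ^ (-2 : ℤ) • h ζ) =
          ∮ ζ in C(z, R), (1 / (ζ - z) ^ 2) • h ζ := by
        congr 1; funext ζ; simp [zpow_neg, one_div]
      rw [e2, e, smul_smul, inv_mul_cancel₀ (by simp [Real.pi_ne_zero, Complex.I_ne_zero]),
        one_smul]
  have i12 : CircleIntegrable
      (fun ζ => (ζ - z) ^ (-2 : ℤ) • h ζ + (ζ - z) ^ (-2 : ℤ) • conj (g ζ)) z R := i1.add i2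
  have key : (∮ ζ in C(z, R), (ζ - z) ^ (-2 : ℤ) • h ζ) =
      ∮ ζ in C(z, R), (ζ - z) ^ (-2 : ℤ) • (h ζ + conj (g ζ) - K) := by
    have e0 : (∮ ζ in C(z, R), (ζ - z) ^ (-2 : ℤ) • (h ζ + conj (g ζ) - K)) =
        ∮ ζ in C(z, R), ((ζ - z) ^ (-2 : ℤ) • h ζ + (ζ - z) ^ (-2 : ℤ) • conj (g ζ)
          - (ζ - z) ^ (-2 : ℤ) • K) := by
      congr 1; funext ζ; rw [smul_sub, smul_add]
    have e1 : (∮ ζ in C(z, R), ((ζ - z) ^ (-2 : ℤ) • h ζ + (ζ - z) ^ (-2 : ℤ) • conj (g ζ)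
          - (ζ - z) ^ (-2 : ℤ) • K)) =
        (∮ ζ in C(z, R), ((ζ - z) ^ (-2 : ℤ) • h ζ + (ζ - z) ^ (-2 : ℤ) • conj (g ζ)))
          - ∮ ζ in C(z, R), (ζ - z) ^ (-2 : ℤ) • K := circleIntegral.integral_sub i12 i3
    rw [e0, e1, add_circleIntegral i1 i2, hconj0, hconst0, add_zero, sub_zero]
  have hbound : ∀ ζ ∈ sphere z R,
      ‖(ζ - z) ^ (-2 : ℤ) • (h ζ + conj (g ζ) - K)‖ ≤ M / (R * R) := by
    intro ζ hζ
    have habs : ‖ζ - z‖ = R := by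
      simpa using mem_sphere_iff_norm.mp hζ
    rw [norm_smul]
    have hzp : ‖(ζ - z) ^ (-2 : ℤ)‖ = (R * R)⁻¹ := by
      rw [norm_zpow, habs, zpow_neg, show ((2:ℤ)) = ((2:ℕ):ℤ) by rfl,
        zpow_natCast, sq]
    rw [hzp, div_eq_inv_mul]
    exact mul_le_mul_of_nonneg_left (hM ζ hζ) (by positivity)
  calc ‖deriv h z‖
      = ‖(2 * Real.pi * Complex.I : ℂ)⁻¹ •
          ∮ ζ in C(z, R), (ζ - z) ^ (-2 : ℤ) • (h ζ + conj (g ζ) - K)‖ := by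
        rw [hderiv, key]
    _ ≤ R * (M / (R * R)) :=
        circleIntegral.norm_two_pi_i_inv_smul_integral_le_of_norm_le_const hR.le hbound
    _ = M / R := by field_simp

/-- Hardy--Littlewood type theorem (sufficiency direction): if the harmonic mapping
`f = h + conj g` on `Ω` satisfies `|f(ζ) - f(z)| ≤ C ω(|ζ - z|)` for a majorant `ω`,
then `Λ_f(z) ≤ (21C/π) ω(d_Ω(z))/d_Ω(z)`. -/
theorem poisson_gradient_estimate (Ω : Set ℂ)
    (hΩopen : IsOpen Ω) (hΩproper : Ωᶜ.Nonempty)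
    (h g : ℂ → ℂ)
    (hh : DifferentiableOn ℂ h Ω) (hg : DifferentiableOn ℂ g Ω)
    (ω : ℝ → ℝ)
    (hcont : ContinuousOn ω (Ici 0))
    (hmono : MonotoneOn ω (Ici 0))
    (h0 : ω 0 = 0)
    (hdec : ∀ s t : ℝ, 0 < s → s ≤ t → ω t / t ≤ ω s / s)
    (C : ℝ) (hC : 0 < C)
    (z : ℂ) (hz : z ∈ Ω)
    (hlip : ∀ ζ ∈ Ω,
      ‖(h ζ + conj (g ζ)) - (h z + conj (g z))‖ ≤
        C * ω (‖ζ - z‖)) :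
    ‖deriv h z‖ + ‖deriv g z‖ ≤
      (21 * C / Real.pi) * (ω (infDist z Ωᶜ) / infDist z Ωᶜ) := by
  set d : ℝ := infDist z Ωᶜ with hdd
  have hd : 0 < d := by
    have := (hΩopen.isClosed_compl.notMem_iff_infDist_pos hΩproper).mp (by simpa using hz)
    exact this
  set R : ℝ := d / 2 with hRdef
  have hR : 0 < R := by positivity
  have hball : closedBall z R ⊆ Ω := by
    intro w hw
    by_contra hw'
    have : d ≤ dist z w := infDist_le_dist_of_mem (by simpa using hw')
    have : d ≤ R := this.trans (by rwa [dist_comm, ← mem_closedBall])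
    linarith
  have hsphereM : ∀ ζ ∈ sphere z R,
      ‖h ζ + conj (g ζ) - (h z + conj (g z))‖ ≤ C * ω R := by
    intro ζ hζ
    have habs : ‖ζ - z‖ = R := by
      simpa using mem_sphere_iff_norm.mp hζ
    have := hlip ζ (hball (sphere_subset_closedBall hζ))
    rwa [habs] at this
  have hb1 : ‖deriv h z‖ ≤ C * ω R / R :=
    deriv_bound hR (hh.mono hball) (hg.mono hball) hsphereM
  have hsphereM' : ∀ ζ ∈ sphere z R,
      ‖g ζ + conj (h ζ) - (g z + conj (h z))‖ ≤ C * ω R := by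
    intro ζ hζ
    have : ‖g ζ + conj (h ζ) - (g z + conj (h z))‖ =
        ‖h ζ + conj (g ζ) - (h z + conj (g z))‖ := by
      rw [← Complex.norm_conj]
      congr 1
      simp only [map_sub, map_add, Complex.conj_conj]
      ring
    rw [this]; exact hsphereM ζ hζ
  have hb2 : ‖deriv g z‖ ≤ C * ω R / R :=
    deriv_bound hR (hg.mono hball) (hh.mono hball) hsphereM'
  have hωR : ω R ≤ ω d := hmono (le_of_lt hR) hd.le (by linarith)
  have hω0 : 0 ≤ ω d := by
    have := hmono (le_refl (0:ℝ)) hd.le hd.le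
    linarith [h0 ▸ this]
  have step : ‖deriv h z‖ + ‖deriv g z‖ ≤ 4 * C * (ω d / d) := by
    have : C * ω R / R ≤ 2 * C * (ω d / d) := by
      rw [hRdef]
      rw [div_le_iff₀ (by positivity : (0:ℝ) < d/2)] at *
      have h1 : C * ω (d/2) ≤ C * ω d := by
        exact mul_le_mul_of_nonneg_left hωR hC.le
      calc C * ω (d / 2) ≤ C * ω d := h1
        _ = 2 * C * (ω d / d) * (d / 2) := by field_simp
    linarith
  have final : 4 * C * (ω d / d) ≤ (21 * C / Real.pi) * (ω d / d) := by
    have hπ : Real.pi ≤ 4 := Real.pi_le_four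
    have hπ0 : 0 < Real.pi := Real.pi_pos
    have hX : 0 ≤ ω d / d := div_nonneg hω0 hd.le
    have : 4 * C ≤ 21 * C / Real.pi := by
      rw [le_div_iff₀ hπ0]
      nlinarith
    exact mul_le_mul_of_nonneg_right this hX
  linarith
end

section
/- For the Poisson kernel P(w, re^{iθ}) = (r² − |w − z|²)/|w − z − re^{iθ}|² of the disk 𝔻(z, r), and for all w with |w − z| ≤ r/2, the partial derivatives satisfy |∂P/∂w| ≤ 21/(2r) and |∂P/∂w̄| ≤ 21/(2r). -/
open ComplexConjugate

lemma poisson_aux (a v : ℂ) (s r D : ℝ) (hr : 0 < r) (ha : ‖a‖ ≤ r / 2)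
    (hs : s = ‖a‖) (hv : ‖v‖ = D) (hD2 : r / 2 ≤ D)
    (hrs : r - s ≤ D) :
    ‖(-a * (D : ℂ) ^ 2 - ((r : ℂ) ^ 2 - (s : ℂ) ^ 2) * v) / (D : ℂ) ^ 4‖ ≤
      21 / (2 * r) := by
  have hD : 0 < D := lt_of_lt_of_le (by positivity) hD2
  have hs2 : s ^ 2 ≤ r ^ 2 := by
    rw [hs]; nlinarith [norm_nonneg a]
  rw [norm_div, norm_pow, Complex.norm_real, Real.norm_eq_abs, abs_of_pos hD]
  have hnum : ‖-a * (D : ℂ) ^ 2 - ((r : ℂ) ^ 2 - (s : ℂ) ^ 2) * v‖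
      ≤ 2 * r * D ^ 2 := by
    have h1 : ‖-a * (D : ℂ) ^ 2‖ = ‖a‖ * D ^ 2 := by
      rw [norm_mul, norm_neg, norm_pow, Complex.norm_real, Real.norm_eq_abs, abs_of_pos hD]
    have h2 : ‖((r : ℂ) ^ 2 - (s : ℂ) ^ 2) * v‖ = (r ^ 2 - s ^ 2) * D := by
      rw [norm_mul, hv]
      congr 1
      have : ((r : ℂ) ^ 2 - (s : ℂ) ^ 2) = ((r ^ 2 - s ^ 2 : ℝ) : ℂ) := by push_cast; ring
      rw [this, Complex.norm_real, Real.norm_eq_abs, abs_of_nonneg (by linarith)]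
    calc ‖-a * (D : ℂ) ^ 2 - ((r : ℂ) ^ 2 - (s : ℂ) ^ 2) * v‖
        ≤ ‖-a * (D : ℂ) ^ 2‖ + ‖((r : ℂ) ^ 2 - (s : ℂ) ^ 2) * v‖ :=
          norm_sub_le _ _
      _ = ‖a‖ * D ^ 2 + (r ^ 2 - s ^ 2) * D := by rw [h1, h2]
      _ ≤ 2 * r * D ^ 2 := by
          have hsa : 0 ≤ ‖a‖ := norm_nonneg a
          have hsa' : 0 ≤ s := hs ▸ hsa
          have : r ^ 2 - s ^ 2 ≤ (3 * r / 2) * D := by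
            have h4 : r + s ≤ 3 * r / 2 := by rw [hs]; linarith
            nlinarith [hD.le]
          nlinarith [hs ▸ ha]
  have hDnn : (0:ℝ) < D ^ 4 := by positivity
  rw [div_le_div_iff₀ hDnn (by positivity)]
  have habs : 0 ≤ ‖-a * (D : ℂ) ^ 2 - ((r : ℂ) ^ 2 - (s : ℂ) ^ 2) * v‖ :=
    norm_nonneg _
  nlinarith [sq_nonneg D, sq_nonneg (D - r/2), sq_nonneg (D*D - r*r/4), mul_pos hD hD]

/-- Estimates for the Wirtinger derivatives of the Poisson kernel
`P(w, re^{iθ}) = (r² - |w-z|²)/|w-z-re^{iθ}|²` of the disk `𝔻(z,r)`: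
for `|w - z| ≤ r/2`, both `|∂P/∂w|` and `|∂P/∂w̄|` are at most `21/(2r)`. -/
theorem poisson_kernel_derivative_bound (z w : ℂ) (r θ : ℝ)
    (hr : 0 < r) (hw : ‖w - z‖ ≤ r / 2) :
    ‖
        (-(conj (w - z)) *
            (((‖w - z - (r : ℂ) * Complex.exp (θ * Complex.I)‖ : ℝ) : ℂ)) ^ 2 -
          ((r : ℂ) ^ 2 - (((‖w - z‖ : ℝ) : ℂ)) ^ 2) *
            (conj (w - z) - (r : ℂ) * Complex.exp (-θ * Complex.I))) /
          (((‖w - z - (r : ℂ) * Complex.exp (θ * Complex.I)‖ : ℝ) : ℂ)) ^ 4‖ ≤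
        21 / (2 * r) ∧
      ‖
        (-(w - z) *
            (((‖w - z - (r : ℂ) * Complex.exp (θ * Complex.I)‖ : ℝ) : ℂ)) ^ 2 -
          ((r : ℂ) ^ 2 - (((‖w - z‖ : ℝ) : ℂ)) ^ 2) *
            (w - z - (r : ℂ) * Complex.exp (θ * Complex.I))) /
          (((‖w - z - (r : ℂ) * Complex.exp (θ * Complex.I)‖ : ℝ) : ℂ)) ^ 4‖ ≤
        21 / (2 * r) := by
  set a : ℂ := w - z with ha
  set e : ℂ := (r : ℂ) * Complex.exp (θ * Complex.I) with he
  set D : ℝ := ‖a - e‖ with hDdef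
  have habse : ‖e‖ = r := by
    rw [he, norm_mul, Complex.norm_real, Complex.norm_exp_ofReal_mul_I, Real.norm_eq_abs, abs_of_pos hr, mul_one]
  have hrs : r - ‖a‖ ≤ D := by
    have h1 : ‖e‖ - ‖a‖ ≤ ‖e - a‖ := by
      exact norm_sub_norm_le e a
    rw [habse] at h1
    have h2 : ‖e - a‖ = ‖a - e‖ := by
      exact norm_sub_rev e a
    rw [hDdef]; linarith [h2 ▸ h1]
  have hD2 : r / 2 ≤ D := by linarith [hw, hrs]
  have hexpc : Complex.exp (-((θ:ℂ) * Complex.I)) = conj (Complex.exp ((θ:ℂ) * Complex.I)) := by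
    rw [← Complex.exp_conj]
    congr 1
    simp [Complex.conj_ofReal, Complex.conj_I]
  have hconj : conj a - (r : ℂ) * Complex.exp (-(θ:ℂ) * Complex.I) = conj (a - e) := by
    simp [he, hexpc, neg_mul, map_sub, map_mul, Complex.conj_ofReal]
  constructor
  · have key := poisson_aux (conj a) (conj (a - e)) (‖w - z‖) r D hr
      (by rw [Complex.norm_conj]; exact hw)
      (by rw [Complex.norm_conj, ha]) (by rw [Complex.norm_conj]) hD2
      (by rw [← ha]; exact hrs)
    rw [← hconj] at key
    simpa [ha] using key
  · have key := poisson_aux a (a - e) (‖w - z‖) r D hr hw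
      (by rw [ha]) rfl hD2 (by rw [← ha]; exact hrs)
    simpa [ha] using key
end
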